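/- arXiv:2111.08075 — 2 statements merged into one kernel-verified Lean document; each statement's English description precedes it below -/
import Mathlib

section
/- Let n ≥ 1 and let P = {p_1 > p_2 > ⋯ > p_k} be any subset of [n], listed in decreasing order, with the conventions p_0 = n + 1 and p_{k+1} = 1. Then the number of decorated Motzkin walks is |M_n(P)| = 2^{n−k} · Σ_{r ∈ R_k} Π_{t=0}^{k} (r_t + 1)^{p_t − p_{t+1}}. -/
/-- Height after `t` steps of the ±1 walk whose up-steps are recorded by `ε`. -/
def ht (k : ℕ) (ε : Fin k → Bool) (t : ℕ) : ℤ :=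
  ∑ s ∈ Finset.univ.filter (fun s : Fin k => (s : ℕ) < t),
    (if ε s then (1 : ℤ) else -1)

/-- Height of the walk with step slopes `d` after the first `q` steps. -/
def hgt (n : ℕ) (d : Fin n → ℤ) (q : ℕ) : ℤ :=
  ∑ s ∈ Finset.univ.filter (fun s : Fin n => (s : ℕ) < q), d s

def dOf (n k : ℕ) (p : ℕ → ℕ) (ε : Fin k → Bool) (q : Fin n) : ℤ :=
  ∑ t : Fin k, if p ((t:ℕ)+1) = n - (q:ℕ) then (if ε t then (1:ℤ) else -1) else 0

def cnt (n k : ℕ) (p : ℕ → ℕ) (q : ℕ) : ℕ :=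
  (Finset.univ.filter (fun t : Fin k => n - q < p ((t:ℕ)+1))).card

def markSet (x : ℤ) : Finset Bool :=
  if x = 0 then Finset.univ else if x = 1 then {true} else {false}

lemma markSet_card (x : ℤ) : (markSet x).card = if x = 0 then 2 else 1 := by
  unfold markSet
  split_ifs <;> simp

lemma markSet_mem' {x : ℤ} {b : Bool} (h : b ∈ markSet x) :
    (x = 1 → b = true) ∧ (x = -1 → b = false) := by
  unfold markSet at h
  split_ifs at h with h0 h1
  · subst h0; exact ⟨by omega, by omega⟩
  · subst h1; simp at h; exact ⟨fun _ => h, by omega⟩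
  · simp at h; exact ⟨fun hx => absurd hx h1, fun _ => h⟩

lemma markSet_mem {x : ℤ} (hx : x = 1 ∨ x = -1 ∨ x = 0) {b : Bool}
    (h1 : x = 1 → b = true) (h2 : x = -1 → b = false) : b ∈ markSet x := by
  unfold markSet
  rcases hx with hx | hx | hx <;> subst hx <;> simp_all

lemma ht_zero (k : ℕ) (ε : Fin k → Bool) : ht k ε 0 = 0 := by
  unfold ht
  simp

lemma ht_succ (k : ℕ) (ε : Fin k → Bool) (t : ℕ) (htk : t < k) :
    ht k ε (t+1) = ht k ε t + (if ε ⟨t, htk⟩ then 1 else -1) := by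
  unfold ht
  have h : Finset.univ.filter (fun s : Fin k => (s:ℕ) < t+1)
      = insert ⟨t, htk⟩ (Finset.univ.filter (fun s : Fin k => (s:ℕ) < t)) := by
    ext s
    simp only [Finset.mem_filter, Finset.mem_univ, true_and, Finset.mem_insert, Fin.ext_iff]
    omega
  rw [h, Finset.sum_insert (by simp)]
  ring_nf

lemma downset_iff {k : ℕ} (Q : Fin k → Prop) [DecidablePred Q]
    (hQ : ∀ s t : Fin k, s ≤ t → Q t → Q s) (t : Fin k) :
    (t : ℕ) < (Finset.univ.filter Q).card ↔ Q t := by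
  constructor
  · intro h
    by_contra hQt
    have hsub : Finset.univ.filter Q ⊆ Finset.Iio t := by
      intro s hs
      simp only [Finset.mem_filter] at hs
      rw [Finset.mem_Iio]
      by_contra hts
      exact hQt (hQ t s (le_of_not_gt hts) hs.2)
    have := Finset.card_le_card hsub
    rw [Fin.card_Iio] at this
    omega
  · intro h
    have hsub : Finset.Iic t ⊆ Finset.univ.filter Q := by
      intro s hs
      simp only [Finset.mem_Iic] at hs
      simp only [Finset.mem_filter, Finset.mem_univ, true_and]
      exact hQ s t hs h
    have := Finset.card_le_card hsub
    rw [Fin.card_Iic] at this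
    omega

section
variable (n k : ℕ) (p : ℕ → ℕ)
variable (hmono : ∀ s t : ℕ, 1 ≤ s → s < t → t ≤ k → p t < p s)
variable (hpn : ∀ t, 1 ≤ t → t ≤ k → 1 ≤ p t ∧ p t ≤ n)

lemma cnt_le (q : ℕ) : cnt n k p q ≤ k := by
  unfold cnt
  have := Finset.card_filter_le (Finset.univ : Finset (Fin k))
    (fun t : Fin k => n - q < p ((t:ℕ)+1))
  simpa using this

include hmono in
lemma cnt_downset (q : ℕ) (t : Fin k) :
    (t : ℕ) < cnt n k p q ↔ n - q < p ((t:ℕ)+1) := by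
  apply downset_iff
  intro s t hst hQ
  rcases eq_or_lt_of_le (show (s:ℕ) ≤ (t:ℕ) from hst) with h | h
  · rwa [show ((s:ℕ)+1) = ((t:ℕ)+1) by omega]
  · exact lt_trans hQ (hmono ((s:ℕ)+1) ((t:ℕ)+1) (by omega) (by omega) (by omega))

include hmono hpn in
lemma hgt_dOf (ε : Fin k → Bool) (q : ℕ) (hq : q ≤ n) :
    hgt n (dOf n k p ε) q = ht k ε (cnt n k p q) := by
  unfold hgt dOf ht
  rw [Finset.sum_comm]
  conv_rhs => rw [Finset.sum_filter]
  apply Finset.sum_congr rfl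
  intro t _
  have hpt := hpn ((t:ℕ)+1) (by omega) (by omega)
  have hs0 : n - p ((t:ℕ)+1) < n := by omega
  have key : ∀ s : Fin n, (p ((t:ℕ)+1) = n - (s:ℕ)) ↔ s = ⟨n - p ((t:ℕ)+1), hs0⟩ := by
    intro s
    rw [Fin.ext_iff]
    have := s.isLt
    simp only []
    omega
  calc ∑ s ∈ Finset.univ.filter (fun s : Fin n => (s:ℕ) < q),
        (if p ((t:ℕ)+1) = n - (s:ℕ) then (if ε t then (1:ℤ) else -1) else 0)
      = ∑ s ∈ Finset.univ.filter (fun s : Fin n => (s:ℕ) < q),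
        (if s = ⟨n - p ((t:ℕ)+1), hs0⟩ then (if ε t then (1:ℤ) else -1) else 0) := by
        apply Finset.sum_congr rfl; intro s _; simp only [key s]
    _ = if (⟨n - p ((t:ℕ)+1), hs0⟩ : Fin n) ∈ Finset.univ.filter (fun s : Fin n => (s:ℕ) < q)
          then (if ε t then (1:ℤ) else -1) else 0 := Finset.sum_ite_eq' _ _ _
    _ = if (t:ℕ) < cnt n k p q then (if ε t then (1:ℤ) else -1) else 0 := by
        apply if_congr _ rfl rfl
        rw [cnt_downset n k p hmono]
        simp only [Finset.mem_filter, Finset.mem_univ, true_and]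
        omega

include hmono in
lemma p_inj {s t : ℕ} (hs : 1 ≤ s) (hsk : s ≤ k) (hts : 1 ≤ t) (htk : t ≤ k)
    (h : p s = p t) : s = t := by
  rcases lt_trichotomy s t with h1 | h1 | h1
  · have := hmono s t hs h1 htk; omega
  · exact h1
  · have := hmono t s hts h1 hsk; omega

include hmono in
lemma dOf_eq_of (ε : Fin k → Bool) (q : Fin n) (t : Fin k)
    (h : p ((t:ℕ)+1) = n - (q:ℕ)) :
    dOf n k p ε q = if ε t then 1 else -1 := by
  unfold dOf
  rw [Finset.sum_eq_single t]
  · rw [if_pos h]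
  · intro b _ hbt
    rw [if_neg]
    intro hb
    exact hbt (Fin.ext (by
      have := p_inj k p hmono (s := (b:ℕ)+1) (t := (t:ℕ)+1) (by omega) (by omega)
        (by omega) (by omega) (hb.trans h.symm)
      omega))
  · simp

lemma dOf_eq_zero (ε : Fin k → Bool) (q : Fin n)
    (h : ∀ t : Fin k, p ((t:ℕ)+1) ≠ n - (q:ℕ)) : dOf n k p ε q = 0 := by
  unfold dOf
  apply Finset.sum_eq_zero
  intro t _
  rw [if_neg (h t)]

include hmono hpn in
lemma cnt_attain (m : ℕ) (hm : m < k) : cnt n k p (n - p (m+1)) = m := by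
  have hpm := hpn (m+1) (by omega) (by omega)
  have key : ∀ t : Fin k, ((t:ℕ) < cnt n k p (n - p (m+1)) ↔ (t:ℕ) < m) := by
    intro t
    rw [cnt_downset n k p hmono]
    have h1 : n - (n - p (m+1)) = p (m+1) := by omega
    rw [h1]
    constructor
    · intro h
      by_contra hmt
      push_neg at hmt
      rcases eq_or_lt_of_le hmt with h2 | h2
      · rw [h2] at h; omega
      · have := hmono (m+1) ((t:ℕ)+1) (by omega) (by omega) (by omega); omega
    · intro h
      exact hmono ((t:ℕ)+1) (m+1) (by omega) (by omega) (by omega)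
  have h1 := key ⟨m, hm⟩
  rw [show ((⟨m, hm⟩ : Fin k) : ℕ) = m from rfl] at h1
  rcases Nat.eq_zero_or_pos m with h0 | h0
  · omega
  · have h2 := key ⟨m-1, by omega⟩
    rw [show ((⟨m-1, by omega⟩ : Fin k) : ℕ) = m-1 from rfl] at h2
    omega

variable (hp0 : p 0 = n + 1) (hpk : p (k + 1) = 1)

include hmono hpn hp0 hpk in
lemma cnt_eq_iff (q : ℕ) (hq : q < n) (m : ℕ) (hm : m ≤ k) :
    cnt n k p q = m ↔ (p (m+1) ≤ n - q ∧ n - q < p m) := by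
  have hck := cnt_le n k p q
  have hge : ∀ j : ℕ, 1 ≤ j → j ≤ k → (j ≤ cnt n k p q ↔ n - q < p j) := by
    intro j h1 h2
    have hds := cnt_downset n k p hmono q ⟨j-1, by omega⟩
    rw [show ((⟨j-1, by omega⟩ : Fin k) : ℕ) = j-1 from rfl] at hds
    rw [show (j-1)+1 = j by omega] at hds
    omega
  constructor
  · intro h
    subst h
    constructor
    · by_cases hck' : cnt n k p q < k
      · have := hge (cnt n k p q + 1) (by omega) (by omega); omega
      · have he : cnt n k p q = k := by omega
        rw [he, hpk]; omega
    · by_cases h0 : cnt n k p q = 0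
      · rw [h0, hp0]; omega
      · have := hge (cnt n k p q) (by omega) (by omega); omega
  · rintro ⟨h1, h2⟩
    by_cases h0 : m = 0
    · subst h0
      rcases Nat.eq_zero_or_pos k with hk0 | hk0
      · omega
      · have h1' : p 1 ≤ n - q := by simpa using h1
        have := hge 1 le_rfl hk0; omega
    · have ha := hge m (by omega) (by omega)
      by_cases hmk : m = k
      · subst hmk; omega
      · have hb := hge (m+1) (by omega) (by omega); omega

include hmono hpn hp0 hpk in
lemma fiber_card (hn : 1 ≤ n) (m : ℕ) (hm : m ≤ k) :
    (Finset.univ.filter (fun q : Fin n => cnt n k p (q:ℕ) = m)).card = p m - p (m+1) := by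
  have hp1 : 1 ≤ p (m+1) := by
    rcases eq_or_lt_of_le hm with h | h
    · rw [h, hpk]
    · exact (hpn (m+1) (by omega) (by omega)).1
  have hpmn : p m ≤ n + 1 := by
    rcases Nat.eq_zero_or_pos m with h | h
    · rw [h, hp0]
    · exact le_trans (hpn m h (by omega)).2 (by omega)
  rw [← Nat.card_Ico (p (m+1)) (p m)]
  apply Finset.card_bij' (i := fun (q : Fin n) _ => n - (q:ℕ))
    (j := fun x hx => (⟨n - x, by
      rw [Finset.mem_Ico] at hx; omega⟩ : Fin n))
  case hi =>
    intro q hq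
    rw [Finset.mem_filter] at hq
    rw [Finset.mem_Ico]
    have := (cnt_eq_iff n k p hmono hpn hp0 hpk (q:ℕ) q.isLt m hm).mp hq.2
    omega
  case hj =>
    intro x hx
    have hx' := hx
    rw [Finset.mem_Ico] at hx'
    rw [Finset.mem_filter]
    refine ⟨Finset.mem_univ _, ?_⟩
    rw [show (((⟨n - x, by rw [Finset.mem_Ico] at hx; omega⟩ : Fin n)) : ℕ) = n - x from rfl]
    rw [cnt_eq_iff n k p hmono hpn hp0 hpk (n - x) (by omega) m hm]
    omega
  case left_inv =>
    intro q hq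
    apply Fin.ext
    have := q.isLt
    simp only []
    omega
  case right_inv =>
    intro x hx
    rw [Finset.mem_Ico] at hx
    simp only []
    omega

include hmono hpn hp0 hpk in
lemma good_iff (hn : 1 ≤ n) (ε : Fin k → Bool) :
    (∀ q : Fin n, 0 ≤ ht k ε (cnt n k p (q:ℕ))) ↔
      ((∀ m, m < k → 0 ≤ ht k ε m) ∧ (2 ≤ p k → 0 ≤ ht k ε k)) := by
  constructor
  · intro h
    constructor
    · intro m hm
      have hpm := hpn (m+1) (by omega) (by omega)
      have hq : n - p (m+1) < n := by omega
      have h2 := h ⟨n - p (m+1), hq⟩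
      rwa [show ((⟨n - p (m+1), hq⟩ : Fin n) : ℕ) = n - p (m+1) from rfl,
        cnt_attain n k p hmono hpn m hm] at h2
    · intro h2
      rcases Nat.eq_zero_or_pos k with hk0 | hk0
      · subst hk0; rw [ht_zero]
      · have hpkk := hpn k hk0 le_rfl
        have hq : n - p k + 1 < n := by omega
        have hc : cnt n k p (n - p k + 1) = k := by
          rw [cnt_eq_iff n k p hmono hpn hp0 hpk _ (by omega) k le_rfl, hpk]
          omega
        have h3 := h ⟨n - p k + 1, hq⟩
        rwa [show ((⟨n - p k + 1, hq⟩ : Fin n) : ℕ) = n - p k + 1 from rfl, hc] at h3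
  · rintro ⟨hA, hB⟩ q
    have hc := cnt_le n k p (q:ℕ)
    rcases eq_or_lt_of_le hc with he | hlt
    · rw [he]
      rcases Nat.eq_zero_or_pos k with hk0 | hk0
      · subst hk0; rw [ht_zero]
      · apply hB
        have h2 := (cnt_eq_iff n k p hmono hpn hp0 hpk (q:ℕ) q.isLt k le_rfl).mp he
        rw [hpk] at h2
        have := q.isLt
        omega
    · exact hA _ hlt
end

section
variable (n k : ℕ) (p : ℕ → ℕ)
variable (hmono : ∀ s t : ℕ, 1 ≤ s → s < t → t ≤ k → p t < p s)
variable (hpn : ∀ t, 1 ≤ t → t ≤ k → 1 ≤ p t ∧ p t ≤ n)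

include hmono hpn in
lemma dOf_ne_zero_card (ε : Fin k → Bool) :
    (Finset.univ.filter fun q : Fin n => ¬ dOf n k p ε q = 0).card = k := by
  have he : (Finset.univ.filter fun q : Fin n => ¬ dOf n k p ε q = 0)
      = Finset.univ.image (fun t : Fin k => (⟨n - p ((t:ℕ)+1), by
          have := hpn ((t:ℕ)+1) (by omega) (by omega); omega⟩ : Fin n)) := by
    ext q
    simp only [Finset.mem_filter, Finset.mem_univ, true_and, Finset.mem_image]
    constructor
    · intro h
      by_cases hex : ∃ t : Fin k, p ((t:ℕ)+1) = n - (q:ℕ)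
      · obtain ⟨t, ht'⟩ := hex
        refine ⟨t, ?_⟩
        apply Fin.ext
        have hb := hpn ((t:ℕ)+1) (by omega) (by omega)
        have := q.isLt
        show n - p ((t:ℕ)+1) = (q:ℕ)
        omega
      · push_neg at hex
        exact absurd (dOf_eq_zero n k p ε q hex) h
    · rintro ⟨t, rfl⟩
      have hb := hpn ((t:ℕ)+1) (by omega) (by omega)
      rw [dOf_eq_of n k p hmono ε _ t
        (show p ((t:ℕ)+1) = n - (n - p ((t:ℕ)+1)) by omega)]
      split_ifs <;> simp
  rw [he, Finset.card_image_of_injective _ ?_, Finset.card_univ, Fintype.card_fin]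
  intro a b hab
  rw [Fin.ext_iff] at hab
  have hab' : n - p ((a:ℕ)+1) = n - p ((b:ℕ)+1) := hab
  have ha := hpn ((a:ℕ)+1) (by omega) (by omega)
  have hb := hpn ((b:ℕ)+1) (by omega) (by omega)
  have : p ((a:ℕ)+1) = p ((b:ℕ)+1) := by omega
  have := p_inj k p hmono (s := (a:ℕ)+1) (t := (b:ℕ)+1) (by omega) (by omega)
    (by omega) (by omega) this
  exact Fin.ext (by omega)

include hmono hpn in
lemma dOf_injective : Function.Injective (dOf n k p) := by
  intro a b hab
  funext t
  have hb := hpn ((t:ℕ)+1) (by omega) (by omega)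
  have hq : n - p ((t:ℕ)+1) < n := by omega
  have h1 := congrFun hab ⟨n - p ((t:ℕ)+1), hq⟩
  rw [dOf_eq_of n k p hmono a _ t
      (show p ((t:ℕ)+1) = n - (n - p ((t:ℕ)+1)) by omega),
    dOf_eq_of n k p hmono b _ t
      (show p ((t:ℕ)+1) = n - (n - p ((t:ℕ)+1)) by omega)] at h1
  cases ha : a t <;> cases hbt : b t <;> simp [ha, hbt] at h1 ⊢ <;> omega
end


/-- The set of decorated Motzkin walks `M_n(P)`.  A decorated walk is given by the slopes
`d q ∈ {1, -1, 0}` of its steps (read left to right; the step at 0-indexed position `q`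
is numbered `n - q`, so that steps are numbered `1, …, n` from right to left), together
with a numeric label `ℓ q ∈ {1, …, h + 1}` (`h` being the height at which the step starts)
and a left/right mark (`false`/`true`) for each step.  Steps numbered by elements of `P`
must be up or down steps, all other steps are horizontal; every step starts weakly above
the x-axis; down steps are marked left (`false`) and up steps are marked right (`true`). -/
def decoratedMotzkin (n : ℕ) (P : Finset ℕ) :
    Set ((Fin n → ℤ) × (Fin n → ℕ) × (Fin n → Bool)) :=
  {w | (∀ q : Fin n,
          if n - (q : ℕ) ∈ P then w.1 q = 1 ∨ w.1 q = -1 else w.1 q = 0) ∧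
       (∀ q : Fin n, 0 ≤ hgt n w.1 (q : ℕ)) ∧
       (∀ q : Fin n, 1 ≤ w.2.1 q ∧ (w.2.1 q : ℤ) ≤ hgt n w.1 (q : ℕ) + 1) ∧
       (∀ q : Fin n, (w.1 q = 1 → w.2.2 q = true) ∧ (w.1 q = -1 → w.2.2 q = false))}

theorem card_decoratedMotzkin (n k : ℕ) (hn : 1 ≤ n) (P : Finset ℕ)
    (hP : P ⊆ Finset.Icc 1 n) (hk : P.card = k) (p : ℕ → ℕ)
    (hp0 : p 0 = n + 1) (hpk : p (k + 1) = 1)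
    (hdec : ∀ s t : ℕ, 1 ≤ s → s < t → t ≤ k → p t < p s)
    (himg : P = (Finset.Icc 1 k).image p) :
    ((decoratedMotzkin n P).ncard : ℤ) =
      2 ^ (n - k) *
        ∑ ε ∈ Finset.univ.filter (fun ε : Fin k → Bool =>
            (∀ t < k, 0 ≤ ht k ε t) ∧ -1 ≤ ht k ε k),
          ∏ t ∈ Finset.range (k + 1), (ht k ε t + 1) ^ (p t - p (t + 1)) := by
  classical
  have hpn : ∀ t, 1 ≤ t → t ≤ k → 1 ≤ p t ∧ p t ≤ n := by
    intro t h1 h2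
    have hmem : p t ∈ P := by
      rw [himg]; exact Finset.mem_image_of_mem p (Finset.mem_Icc.mpr ⟨h1, h2⟩)
    have := hP hmem
    rw [Finset.mem_Icc] at this
    exact this
  have hmemP : ∀ m : ℕ, m ∈ P ↔ ∃ t : Fin k, p ((t:ℕ)+1) = m := by
    intro m
    rw [himg, Finset.mem_image]
    constructor
    · rintro ⟨x, hx, rfl⟩
      rw [Finset.mem_Icc] at hx
      refine ⟨⟨x-1, by omega⟩, ?_⟩
      show p ((x-1)+1) = p x
      congr 1; omega
    · rintro ⟨t, rfl⟩
      exact ⟨(t:ℕ)+1, Finset.mem_Icc.mpr ⟨by omega, by omega⟩, rfl⟩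
  set G : Finset (Fin k → Bool) :=
    Finset.univ.filter (fun ε => ∀ q : Fin n, 0 ≤ ht k ε (cnt n k p (q:ℕ))) with hGdef
  have hsetF : decoratedMotzkin n P =
      ↑(G.biUnion (fun ε => {dOf n k p ε} ×ˢ
        (Fintype.piFinset (fun q : Fin n =>
           Finset.Icc 1 ((hgt n (dOf n k p ε) (q:ℕ)).toNat + 1))) ×ˢ
        (Fintype.piFinset (fun q : Fin n => markSet (dOf n k p ε q))))) := by
    ext w
    obtain ⟨d, ℓ, m⟩ := w
    simp only [decoratedMotzkin, Set.mem_setOf_eq]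
    rw [Finset.mem_coe, Finset.mem_biUnion]
    constructor
    · rintro ⟨h1, h2, h3, h4⟩
      have hlt : ∀ t : Fin k, n - p ((t:ℕ)+1) < n := fun t => by
        have := hpn ((t:ℕ)+1) (by omega) (by omega); omega
      have hkey : ∃ ε : Fin k → Bool, d = dOf n k p ε := by
        refine ⟨fun t => decide (d ⟨n - p ((t:ℕ)+1), hlt t⟩ = 1), ?_⟩
        funext q
        by_cases hq : n - (q:ℕ) ∈ P
        · obtain ⟨t, htq⟩ := (hmemP _).mp hq
          rw [dOf_eq_of n k p hdec _ q t htq]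
          have hb := hpn ((t:ℕ)+1) (by omega) (by omega)
          have hqq := q.isLt
          have hqt : (⟨n - p ((t:ℕ)+1), hlt t⟩ : Fin n) = q := by
            apply Fin.ext
            show n - p ((t:ℕ)+1) = (q:ℕ)
            omega
          rw [hqt]
          have h1q := h1 q
          rw [if_pos hq] at h1q
          rcases h1q with h | h <;> simp [h]
        · have h1q := h1 q
          rw [if_neg hq] at h1q
          rw [dOf_eq_zero n k p _ q (fun t ht' => hq ((hmemP _).mpr ⟨t, ht'⟩))]
          exact h1q
      obtain ⟨ε, rfl⟩ := hkey
      refine ⟨ε, ?_, ?_⟩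
      · rw [hGdef, Finset.mem_filter]
        refine ⟨Finset.mem_univ _, fun q => ?_⟩
        rw [← hgt_dOf n k p hdec hpn ε (q:ℕ) q.isLt.le]
        exact h2 q
      · refine Finset.mem_product.mpr ⟨Finset.mem_singleton_self _,
          Finset.mem_product.mpr ⟨?_, ?_⟩⟩
        · rw [Fintype.mem_piFinset]
          intro q
          have h3q : 1 ≤ ℓ q ∧ (ℓ q : ℤ) ≤ hgt n (dOf n k p ε) (q:ℕ) + 1 := h3 q
          have h2q : (0:ℤ) ≤ hgt n (dOf n k p ε) (q:ℕ) := h2 q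
          show ℓ q ∈ Finset.Icc 1 ((hgt n (dOf n k p ε) (q:ℕ)).toNat + 1)
          rw [Finset.mem_Icc]
          exact ⟨h3q.1, by omega⟩
        · rw [Fintype.mem_piFinset]
          intro q
          apply markSet_mem ?_ (h4 q).1 (h4 q).2
          have h1q := h1 q
          by_cases hq : n - (q:ℕ) ∈ P
          · rw [if_pos hq] at h1q; tauto
          · rw [if_neg hq] at h1q; tauto
    · rintro ⟨ε, hεG, hmem⟩
      rw [Finset.mem_product] at hmem
      obtain ⟨hd, hrest⟩ := hmem
      rw [Finset.mem_product] at hrest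
      obtain ⟨hℓ, hm⟩ := hrest
      rw [Finset.mem_singleton] at hd
      have hG2 := (Finset.mem_filter.mp hεG).2
      subst hd
      refine ⟨?_, ?_, ?_, ?_⟩
      · intro q
        by_cases hq : n - (q:ℕ) ∈ P
        · rw [if_pos hq]
          obtain ⟨t, htq⟩ := (hmemP _).mp hq
          rw [dOf_eq_of n k p hdec ε q t htq]
          split_ifs
          · exact Or.inl rfl
          · exact Or.inr rfl
        · rw [if_neg hq]
          exact dOf_eq_zero n k p ε q (fun t ht' => hq ((hmemP _).mpr ⟨t, ht'⟩))
      · intro q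
        rw [hgt_dOf n k p hdec hpn ε (q:ℕ) q.isLt.le]
        exact hG2 q
      · intro q
        have hq1 : ℓ q ∈ Finset.Icc 1 ((hgt n (dOf n k p ε) (q:ℕ)).toNat + 1) :=
          Fintype.mem_piFinset.mp hℓ q
        rw [Finset.mem_Icc] at hq1
        have h2q : (0:ℤ) ≤ hgt n (dOf n k p ε) (q:ℕ) := by
          rw [hgt_dOf n k p hdec hpn ε (q:ℕ) q.isLt.le]; exact hG2 q
        refine ⟨hq1.1, ?_⟩
        show (ℓ q : ℤ) ≤ hgt n (dOf n k p ε) (q:ℕ) + 1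
        omega
      · intro q
        exact markSet_mem' (Fintype.mem_piFinset.mp hm q)
  have hdisj : ∀ ε1 ∈ G, ∀ ε2 ∈ G, ε1 ≠ ε2 → Disjoint
      ({dOf n k p ε1} ×ˢ
        (Fintype.piFinset (fun q : Fin n =>
           Finset.Icc 1 ((hgt n (dOf n k p ε1) (q:ℕ)).toNat + 1))) ×ˢ
        (Fintype.piFinset (fun q : Fin n => markSet (dOf n k p ε1 q))))
      ({dOf n k p ε2} ×ˢ
        (Fintype.piFinset (fun q : Fin n =>
           Finset.Icc 1 ((hgt n (dOf n k p ε2) (q:ℕ)).toNat + 1))) ×ˢ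
        (Fintype.piFinset (fun q : Fin n => markSet (dOf n k p ε2 q)))) := by
    intro ε1 _ ε2 _ hne
    rw [Finset.disjoint_left]
    rintro ⟨d, ℓ, m⟩ hw1 hw2
    rw [Finset.mem_product] at hw1 hw2
    have e1 := Finset.mem_singleton.mp hw1.1
    have e2 := Finset.mem_singleton.mp hw2.1
    exact hne (dOf_injective n k p hdec hpn (e1.symm.trans e2))
  have hcard : ∀ ε ∈ G, ({dOf n k p ε} ×ˢ
        (Fintype.piFinset (fun q : Fin n =>
           Finset.Icc 1 ((hgt n (dOf n k p ε) (q:ℕ)).toNat + 1))) ×ˢ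
        (Fintype.piFinset (fun q : Fin n => markSet (dOf n k p ε q)))).card
      = (∏ m ∈ Finset.range (k+1), ((ht k ε m).toNat + 1)^(p m - p (m+1))) * 2^(n-k) := by
    intro ε _
    rw [Finset.card_product, Finset.card_product, Finset.card_singleton, one_mul,
      Fintype.card_piFinset, Fintype.card_piFinset]
    congr 1
    · calc ∏ q : Fin n, (Finset.Icc 1 ((hgt n (dOf n k p ε) (q:ℕ)).toNat + 1)).card
          = ∏ q : Fin n, ((ht k ε (cnt n k p (q:ℕ))).toNat + 1) := by
            apply Finset.prod_congr rfl
            intro q _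
            rw [Nat.card_Icc, hgt_dOf n k p hdec hpn ε (q:ℕ) q.isLt.le]
            omega
        _ = ∏ m ∈ Finset.range (k+1), ((ht k ε m).toNat + 1)^(p m - p (m+1)) := by
            rw [← Finset.prod_fiberwise_of_maps_to (g := fun q : Fin n => cnt n k p (q:ℕ))
                (t := Finset.range (k+1)) (fun q _ => Finset.mem_range.mpr (by
                  show cnt n k p (q:ℕ) < k + 1
                  have := cnt_le n k p (q:ℕ); omega))]
            apply Finset.prod_congr rfl
            intro m hm
            rw [Finset.mem_range] at hm
            calc ∏ q ∈ Finset.univ.filter (fun q : Fin n => cnt n k p (q:ℕ) = m),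
                  ((ht k ε (cnt n k p (q:ℕ))).toNat + 1)
                = ∏ q ∈ Finset.univ.filter (fun q : Fin n => cnt n k p (q:ℕ) = m),
                  ((ht k ε m).toNat + 1) := by
                  apply Finset.prod_congr rfl
                  intro q hq
                  rw [(Finset.mem_filter.mp hq).2]
              _ = ((ht k ε m).toNat + 1)^(p m - p (m+1)) := by
                  rw [Finset.prod_const,
                    fiber_card n k p hdec hpn hp0 hpk hn m (by omega)]
    · calc ∏ q : Fin n, (markSet (dOf n k p ε q)).card
          = ∏ q : Fin n, (if dOf n k p ε q = 0 then 2 else 1) := by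
            apply Finset.prod_congr rfl; intro q _; rw [markSet_card]
        _ = 2^(n-k) := by
            rw [Finset.prod_ite, Finset.prod_const, Finset.prod_const, one_pow, mul_one]
            congr 1
            have h1 := dOf_ne_zero_card n k p hdec hpn ε
            have h2 := Finset.card_filter_add_card_filter_not
              (s := (Finset.univ : Finset (Fin n))) (p := fun q => dOf n k p ε q = 0)
            rw [Finset.card_univ, Fintype.card_fin] at h2
            omega
  have hstep : ∀ ε ∈ G,
      (((∏ m ∈ Finset.range (k+1), ((ht k ε m).toNat + 1)^(p m - p (m+1))) * 2^(n-k) : ℕ) : ℤ)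
      = 2^(n-k) * ∏ m ∈ Finset.range (k+1), (ht k ε m + 1)^(p m - p (m+1)) := by
    intro ε hε
    push_cast
    rw [mul_comm]
    congr 1
    apply Finset.prod_congr rfl
    intro m hm
    rw [Finset.mem_range] at hm
    have hgood := (good_iff n k p hdec hpn hp0 hpk hn ε).mp ((Finset.mem_filter.mp hε).2)
    by_cases hmk : m < k
    · rw [Int.toNat_of_nonneg (hgood.1 m hmk)]
    · have hmk' : m = k := by omega
      rw [hmk']
      by_cases h2 : 2 ≤ p k
      · rw [Int.toNat_of_nonneg (hgood.2 h2)]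
      · have hz : p k - p (k+1) = 0 := by
          rcases Nat.eq_zero_or_pos k with hk0 | hk0
          · exfalso; apply h2; rw [hk0, hp0]; omega
          · have := (hpn k hk0 le_rfl).1
            rw [hpk]; omega
        rw [hz, pow_zero, pow_zero]
  have hGV : G ⊆ Finset.univ.filter (fun ε : Fin k → Bool =>
      (∀ t < k, 0 ≤ ht k ε t) ∧ -1 ≤ ht k ε k) := by
    intro ε hε
    have hgood := (good_iff n k p hdec hpn hp0 hpk hn ε).mp ((Finset.mem_filter.mp hε).2)
    rw [Finset.mem_filter]
    refine ⟨Finset.mem_univ _, hgood.1, ?_⟩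
    rcases Nat.eq_zero_or_pos k with hk0 | hk0
    · subst hk0
      rw [ht_zero]
      omega
    · have hs := ht_succ k ε (k-1) (by omega)
      rw [show k-1+1 = k by omega] at hs
      have h0 := hgood.1 (k-1) (by omega)
      rw [hs]
      split_ifs <;> omega
  have hvanish : ∀ ε ∈ Finset.univ.filter (fun ε : Fin k → Bool =>
      (∀ t < k, 0 ≤ ht k ε t) ∧ -1 ≤ ht k ε k), ε ∉ G →
      (∏ m ∈ Finset.range (k+1), (ht k ε m + 1)^(p m - p (m+1))) = 0 := by
    intro ε hV hnG
    have hVc := (Finset.mem_filter.mp hV).2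
    have hnc : ¬ ∀ q : Fin n, 0 ≤ ht k ε (cnt n k p (q:ℕ)) := by
      intro hc; exact hnG (Finset.mem_filter.mpr ⟨Finset.mem_univ _, hc⟩)
    rw [good_iff n k p hdec hpn hp0 hpk hn ε] at hnc
    push_neg at hnc
    obtain ⟨h2, hlt⟩ := hnc hVc.1
    apply Finset.prod_eq_zero (Finset.self_mem_range_succ k)
    have he : ht k ε k = -1 := by
      have := hVc.2; omega
    rw [he, show (-1 + 1 : ℤ) = 0 by ring, hpk]
    exact zero_pow (by omega)
  rw [hsetF, Set.ncard_coe_finset, Finset.card_biUnion hdisj,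
    Finset.sum_congr rfl hcard, Nat.cast_sum, Finset.sum_congr rfl hstep,
    ← Finset.mul_sum, Finset.sum_subset hGV hvanish]
end

section
/- Let n ≥ 1 and let P = {p_1 > p_2 > ⋯ > p_k} be any subset of [n], listed in decreasing order, with the conventions p_0 = n + 1 and p_{k+1} = 1. Then, as an identity of integers, Σ_{Q ⊆ P} 2^{|Q|+1} · p_n(Q) = 2^{n−k} · Σ_{w ∈ W_k} Π_{t=0}^{k} (w_t + 1)^{p_t − p_{t+1}}, where the factors w_t + 1 may be negative. -/
/-- The pinnacle set of a finite sequence `w` (given as a list): the set of values `w t`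
at interior positions `t` with `w (t-1) < w t > w (t+1)`. -/
def pinSet (w : List ℕ) : Finset ℕ :=
  (((List.range w.length).filter (fun t =>
      decide (0 < t ∧ t + 1 < w.length ∧
        w.getD (t - 1) 0 < w.getD t 0 ∧ w.getD (t + 1) 0 < w.getD t 0))).map
    (fun t => w.getD t 0)).toFinset

/-- `pinCount n P` is the number of permutations of `{1, …, n}` whose pinnacle set is `P`. -/
def pinCount (n : ℕ) (P : Finset ℕ) : ℕ :=
  ((List.range' 1 n).permutations.filter (fun w => decide (pinSet w = P))).length

lemma mem_pinSet {w : List ℕ} {x : ℕ} :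
    x ∈ pinSet w ↔ ∃ t, 0 < t ∧ t + 1 < w.length ∧
      w.getD (t-1) 0 < w.getD t 0 ∧ w.getD (t+1) 0 < w.getD t 0 ∧ w.getD t 0 = x := by
  simp only [pinSet, List.mem_toFinset, List.mem_map, List.mem_filter, List.mem_range,
    decide_eq_true_eq]
  constructor
  · rintro ⟨t, ⟨ht, h1, h2, h3, h4⟩, h5⟩
    exact ⟨t, h1, h2, h3, h4, h5⟩
  · rintro ⟨t, h1, h2, h3, h4, h5⟩
    exact ⟨t, ⟨by omega, h1, h2, h3, h4⟩, h5⟩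

lemma getD_mem {A : List ℕ} {t : ℕ} (h : t < A.length) : A.getD t 0 ∈ A := by
  rw [List.getD_eq_getElem _ _ h]; exact List.getElem_mem _

lemma pinSet_nil : pinSet [] = ∅ := rfl

lemma pinSet_subset {w : List ℕ} : pinSet w ⊆ w.toFinset := by
  intro x hx
  rw [mem_pinSet] at hx
  obtain ⟨t, h1, h2, h3, h4, h5⟩ := hx
  rw [List.mem_toFinset, ← h5]
  exact getD_mem (by omega)

lemma pinSet_append (A B : List ℕ) (v : ℕ) (hA : ∀ x ∈ A, x < v) (hB : ∀ x ∈ B, x < v) :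
    pinSet (A ++ v :: B) =
      (pinSet A ∪ pinSet B) ∪ (if A ≠ [] ∧ B ≠ [] then {v} else ∅) := by
  have hlen : (A ++ v :: B).length = A.length + 1 + B.length := by
    simp [List.length_append]; omega
  have gA : ∀ t, t < A.length → (A ++ v :: B).getD t 0 = A.getD t 0 := fun t ht =>
    List.getD_append _ _ _ _ ht
  have gv : (A ++ v :: B).getD A.length 0 = v := by
    rw [List.getD_append_right _ _ _ _ (le_refl _)]
    simp
  have gB : ∀ s, (A ++ v :: B).getD (A.length + 1 + s) 0 = B.getD s 0 := by
    intro s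
    rw [List.getD_append_right _ _ _ _ (by omega)]
    have : A.length + 1 + s - A.length = s + 1 := by omega
    rw [this, List.getD_cons_succ]
  ext x
  rw [mem_pinSet]
  simp only [Finset.mem_union]
  constructor
  · rintro ⟨t, h1, h2, h3, h4, h5⟩
    rcases lt_trichotomy (t+1) A.length with hc | hc | hc
    · left; left
      rw [mem_pinSet]
      refine ⟨t, h1, hc, ?_, ?_, ?_⟩
      · rw [← gA (t-1) (by omega), ← gA t (by omega)]; exact h3
      · rw [← gA (t+1) (by omega), ← gA t (by omega)]; exact h4
      · rw [← gA t (by omega)]; exact h5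
    · exfalso
      -- position t+1 = A.length is the v position? No! position A.length IS v. t+1 = A.length: w[t+1] = A.getD (t+1)?? t+1 = A.length not < so it's v.
      rw [← hc] at gv
      rw [gv] at h4
      have : (A ++ v :: B).getD t 0 ∈ A := by
        rw [gA t (by omega)]; exact getD_mem (by omega)
      exact absurd h4 (by have := hA _ this; omega)
    · rcases lt_trichotomy t A.length with hd | hd | hd
      · omega
      · -- t = A.length : x = v
        right
        have hAne : A ≠ [] := List.ne_nil_of_length_pos (by omega)
        have hBne : B ≠ [] := List.ne_nil_of_length_pos (by omega)
        simp only [hAne, hBne, ne_eq, not_false_iff, and_self, if_true, Finset.mem_singleton]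
        rw [← h5, hd, gv]
      · -- t > A.length
        rcases Nat.eq_or_lt_of_le hd with he | he
        · -- t = A.length + 1 : w[t-1] = v, h3 : v < w[t], w[t] ∈ B
          exfalso
          have ht1 : t - 1 = A.length := by omega
          rw [ht1, gv] at h3
          have hmem : (A ++ v :: B).getD t 0 ∈ B := by
            have ht0 : t = A.length + 1 + 0 := by omega
            rw [ht0, gB 0]
            exact getD_mem (by omega)
          have := hB _ hmem; omega
        · -- t ≥ A.length + 2
          left; right
          rw [mem_pinSet]
          set s := t - A.length - 1 with hs
          have hts : t = A.length + 1 + s := by omega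
          refine ⟨s, by omega, by omega, ?_, ?_, ?_⟩
          · have : t - 1 = A.length + 1 + (s-1) := by omega
            rw [this, gB] at h3
            rw [hts, gB] at h3
            exact h3
          · have : t + 1 = A.length + 1 + (s+1) := by omega
            rw [this, gB] at h4
            rw [hts, gB] at h4
            exact h4
          · rw [hts, gB] at h5
            exact h5
  · rintro ((hx | hx) | hx)
    · rw [mem_pinSet] at hx
      obtain ⟨t, h1, h2, h3, h4, h5⟩ := hx
      refine ⟨t, h1, by omega, ?_, ?_, ?_⟩
      · rw [gA (t-1) (by omega), gA t (by omega)]; exact h3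
      · rw [gA (t+1) (by omega), gA t (by omega)]; exact h4
      · rw [gA t (by omega)]; exact h5
    · rw [mem_pinSet] at hx
      obtain ⟨s, h1, h2, h3, h4, h5⟩ := hx
      refine ⟨A.length + 1 + s, by omega, by omega, ?_, ?_, ?_⟩
      · have : A.length + 1 + s - 1 = A.length + 1 + (s - 1) := by omega
        rw [this, gB, gB]
        exact h3
      · have : A.length + 1 + s + 1 = A.length + 1 + (s + 1) := by omega
        rw [this, gB, gB]
        exact h4
      · rw [gB]; exact h5
    · by_cases hc : A ≠ [] ∧ B ≠ []
      · rw [if_pos hc] at hx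
        rw [Finset.mem_singleton] at hx
        obtain ⟨hAne, hBne⟩ := hc
        have hA0 : 0 < A.length := List.length_pos_iff.mpr hAne
        have hB0 : 0 < B.length := List.length_pos_iff.mpr hBne
        refine ⟨A.length, hA0, by omega, ?_, ?_, ?_⟩
        · rw [gA (A.length - 1) (by omega), gv]
          exact hA _ (getD_mem (by omega))
        · have : A.length + 1 = A.length + 1 + 0 := by omega
          rw [this, gB, gv]
          exact hB _ (getD_mem (by omega))
        · rw [gv]; exact hx.symm
      · rw [if_neg hc] at hx; simp at hx

-- stage2 body
def permsF (S : Finset ℕ) : Finset (List ℕ) := ((S.sort (· ≤ ·)).permutations).toFinset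

lemma mem_permsF {S : Finset ℕ} {u : List ℕ} :
    u ∈ permsF S ↔ u.Nodup ∧ u.toFinset = S := by
  rw [permsF, List.mem_toFinset, List.mem_permutations]
  constructor
  · intro h
    refine ⟨h.symm.nodup (S.sort_nodup _), ?_⟩
    rw [← Finset.sort_toFinset S (· ≤ ·)]
    exact List.toFinset_eq_of_perm _ _ h
  · rintro ⟨h1, h2⟩
    rw [List.perm_ext_iff_of_nodup h1 (S.sort_nodup _)]
    intro a
    rw [← List.mem_toFinset, h2, ← List.mem_toFinset (l := S.sort (· ≤ ·)),
      Finset.sort_toFinset]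

def wt (P : Finset ℕ) (u : List ℕ) : ℤ :=
  if pinSet u ⊆ P then 2 ^ (pinSet u).card * (if u = [] then 1 else 2) else 0

lemma wt_nil (P : Finset ℕ) : wt P [] = 1 := by
  simp [wt, pinSet_nil]

lemma not_mem_pinSet_of_lt {A : List ℕ} {v : ℕ} (hA : ∀ x ∈ A, x < v) : v ∉ pinSet A := by
  intro h
  have := pinSet_subset h
  rw [List.mem_toFinset] at this
  exact absurd (hA _ this) (lt_irrefl v)

lemma wt_split (P : Finset ℕ) (A B : List ℕ) (v : ℕ) (hA : ∀ x ∈ A, x < v)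
    (hB : ∀ x ∈ B, x < v) (hdisj : Disjoint A.toFinset B.toFinset) :
    wt P (A ++ v :: B) =
      (if A ≠ [] ∧ B ≠ [] then (if v ∈ P then 1 else 0)
        else (if A = [] ∧ B = [] then 2 else 1)) * (wt P A * wt P B) := by
  have hpin := pinSet_append A B v hA hB
  have hdAB : Disjoint (pinSet A) (pinSet B) :=
    Finset.disjoint_of_subset_left pinSet_subset
      (Finset.disjoint_of_subset_right pinSet_subset hdisj)
  have hvA : v ∉ pinSet A := not_mem_pinSet_of_lt hA
  have hvB : v ∉ pinSet B := not_mem_pinSet_of_lt hB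
  by_cases hAe : A = []
  · subst hAe
    by_cases hBe : B = []
    · subst hBe
      simp only [List.nil_append] at hpin ⊢
      have hp : pinSet [v] = ∅ := by simpa [pinSet_nil] using hpin
      simp [wt, hp, pinSet_nil]
    · simp only [List.nil_append] at hpin ⊢
      have h2 : pinSet (v :: B) = pinSet B := by
        rw [hpin]; simp [hBe, pinSet_nil]
      have hne : v :: B ≠ [] := by simp
      by_cases hs : pinSet B ⊆ P
      · simp [wt, h2, hs, hne, hBe, pinSet_nil]
      · simp [wt, h2, hs, hBe, pinSet_nil]
  · by_cases hBe : B = []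
    · subst hBe
      have h2 : pinSet (A ++ [v]) = pinSet A := by
        rw [hpin]; simp [hAe, pinSet_nil]
      have hne : A ++ [v] ≠ [] := by simp
      by_cases hs : pinSet A ⊆ P
      · simp [wt, h2, hs, hne, hAe, pinSet_nil]
      · simp [wt, h2, hs, hne, hAe, pinSet_nil]
    · have hne : A ++ v :: B ≠ [] := by simp
      have h2 : pinSet (A ++ v :: B) = (pinSet A ∪ pinSet B) ∪ {v} := by
        rw [hpin, if_pos ⟨hAe, hBe⟩]
      rw [if_pos ⟨hAe, hBe⟩]
      simp only [wt, h2, hne, if_false]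
      by_cases hv : v ∈ P
      · rw [if_pos hv]
        by_cases hsA : pinSet A ⊆ P
        · by_cases hsB : pinSet B ⊆ P
          · have hsub : (pinSet A ∪ pinSet B) ∪ {v} ⊆ P := by
              intro x hx
              simp only [Finset.mem_union, Finset.mem_singleton] at hx
              rcases hx with (hx | hx) | hx
              · exact hsA hx
              · exact hsB hx
              · rwa [hx]
            rw [if_pos hsub, if_pos hsA, if_pos hsB]
            have hcard : ((pinSet A ∪ pinSet B) ∪ {v}).card
                = (pinSet A).card + (pinSet B).card + 1 := by
              rw [Finset.card_union_of_disjoint, Finset.card_union_of_disjoint hdAB]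
              · simp
              · simp only [Finset.disjoint_singleton_right, Finset.mem_union]
                tauto
            rw [hcard]
            simp only [hAe, hBe, if_false]
            ring
          · have hns : ¬ ((pinSet A ∪ pinSet B) ∪ {v} ⊆ P) := by
              intro h
              exact hsB (fun x hx => h (by simp [hx]))
            rw [if_neg hns, if_neg hsB]
            ring
        · have hns : ¬ ((pinSet A ∪ pinSet B) ∪ {v} ⊆ P) := by
            intro h
            exact hsA (fun x hx => h (by simp [hx]))
          rw [if_neg hns, if_neg hsA]
          ring
      · rw [if_neg hv]
        rw [if_neg (by intro h; exact hv (h (by simp)))]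
        ring

lemma wt_erase_irrel (P : Finset ℕ) (v : ℕ) (u : List ℕ) (hv : v ∉ u.toFinset) :
    wt P u = wt (P.erase v) u := by
  rw [wt, wt]
  have hiff : pinSet u ⊆ P ↔ pinSet u ⊆ P.erase v := by
    constructor
    · intro h x hx
      rw [Finset.mem_erase]
      refine ⟨?_, h hx⟩
      rintro rfl
      exact hv (pinSet_subset hx)
    · intro h x hx
      exact Finset.erase_subset _ _ (h hx)
  by_cases hc : pinSet u ⊆ P
  · rw [if_pos hc, if_pos (hiff.mp hc)]
  · rw [if_neg hc, if_neg (fun h => hc (hiff.mpr h))]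

-- stage3 : list helpers and sum bijections

lemma sigma_mk_eq {α : Type} {β : Type} {a c : α} {b d : β} (h1 : a = c) (h2 : b = d) :
    (⟨a, b⟩ : Σ _ : α, β) = ⟨c, d⟩ := by subst h1; subst h2; rfl

lemma indexOf_append_cons {A B : List ℕ} {v : ℕ} (hv : v ∉ A) :
    (A ++ v :: B).idxOf v = A.length := by
  induction A with
  | nil => simp
  | cons a A ih =>
      have hav : a ≠ v := by intro h; exact hv (by simp [h])
      have hv' : v ∉ A := fun h => hv (by simp [h])
      simp only [List.cons_append, List.length_cons]
      rw [List.idxOf_cons_ne _ hav]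
      rw [ih hv']

lemma eq_take_cons_drop {u : List ℕ} {v : ℕ} (hv : v ∈ u) :
    u = u.take (u.idxOf v) ++ v :: u.drop (u.idxOf v + 1) := by
  have hlt : u.idxOf v < u.length := List.idxOf_lt_length_iff.mpr hv
  conv_lhs => rw [← List.take_append_drop (u.idxOf v) u]
  rw [List.drop_eq_getElem_cons hlt, List.getElem_idxOf hlt]

lemma nodup_mid {A B : List ℕ} {v : ℕ} (h : (A ++ v :: B).Nodup) :
    A.Nodup ∧ B.Nodup ∧ v ∉ A ∧ v ∉ B ∧ A.Disjoint B := by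
  rw [List.nodup_append'] at h
  obtain ⟨h1, h2, h3⟩ := h
  rw [List.nodup_cons] at h2
  exact ⟨h1, h2.2, fun hvA => h3 hvA (by simp), h2.1,
    fun x hx hxB => h3 hx (by simp [hxB])⟩

lemma toFinset_append_cons (A B : List ℕ) (v : ℕ) :
    (A ++ v :: B).toFinset = insert v (A.toFinset ∪ B.toFinset) := by
  ext x
  simp only [List.toFinset_append, List.toFinset_cons, Finset.mem_union, Finset.mem_insert,
    List.mem_toFinset]
  tauto

lemma sdiff_erase_eq {V S : Finset ℕ} {v : ℕ} (hv : v ∈ S) :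
    V \ S = (V.erase v) \ (S.erase v) := by
  ext x
  by_cases hx : x = v <;>
    simp [Finset.mem_sdiff, Finset.mem_erase, hx, hv]

lemma erase_sdiff_eq {W S : Finset ℕ} {v : ℕ} (hS : v ∉ S) :
    (W \ S).erase v = (W.erase v) \ S := by
  ext x
  by_cases hx : x = v <;>
    simp [Finset.mem_sdiff, Finset.mem_erase, hx, hS]

lemma powerset_filter_not_mem (V : Finset ℕ) (v : ℕ) :
    V.powerset.filter (fun S => v ∉ S) = (V.erase v).powerset := by
  ext S
  simp only [Finset.mem_filter, Finset.mem_powerset, Finset.subset_erase]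

lemma length_eq_card {S : Finset ℕ} {w : List ℕ} (hw : w ∈ permsF S) :
    w.length = S.card := by
  obtain ⟨h1, h2⟩ := mem_permsF.mp hw
  rw [← h2, List.toFinset_card_of_nodup h1]

lemma take_drop_facts {w : List ℕ} (i : ℕ) (hnd : w.Nodup) :
    (w.take i).Nodup ∧ (w.drop i).Nodup ∧ (w.take i).Disjoint (w.drop i) ∧
      ((w.drop i).toFinset = w.toFinset \ (w.take i).toFinset) := by
  have hsplit : w.take i ++ w.drop i = w := List.take_append_drop i w
  have hnd2 : (w.take i ++ w.drop i).Nodup := by rwa [hsplit]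
  rw [List.nodup_append'] at hnd2
  obtain ⟨h1, h2, h3⟩ := hnd2
  refine ⟨h1, h2, h3, ?_⟩
  ext x
  simp only [Finset.mem_sdiff, List.mem_toFinset]
  constructor
  · intro hx
    exact ⟨by rw [← hsplit]; exact List.mem_append_right _ hx,
      fun hxA => h3 hxA hx⟩
  · rintro ⟨hx, hxA⟩
    rw [← hsplit] at hx
    rcases List.mem_append.mp hx with h | h
    · exact absurd h hxA
    · exact h

lemma split_perm (T : Finset ℕ) (F G : List ℕ → ℤ) :
    ∑ w ∈ permsF T, ∑ i ∈ Finset.range (T.card + 1), F (w.take i) * G (w.drop i)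
      = ∑ S ∈ T.powerset, ∑ A ∈ permsF S, ∑ B ∈ permsF (T \ S), F A * G B := by
  have hR : ∀ S : Finset ℕ, (∑ A ∈ permsF S, ∑ B ∈ permsF (T \ S), F A * G B)
      = ∑ q ∈ (permsF S) ×ˢ (permsF (T \ S)), F q.1 * G q.2 := by
    intro S; rw [Finset.sum_product]
  simp_rw [hR]
  rw [Finset.sum_sigma' (permsF T) (fun _ => Finset.range (T.card + 1))
    (fun w i => F (w.take i) * G (w.drop i)),
    Finset.sum_sigma' T.powerset (fun S => (permsF S) ×ˢ (permsF (T \ S)))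
    (fun _ q => F q.1 * G q.2)]
  refine Finset.sum_bij'
    (fun x _ => (⟨(x.1.take x.2).toFinset, (x.1.take x.2, x.1.drop x.2)⟩ :
      Σ _ : Finset ℕ, List ℕ × List ℕ))
    (fun y _ => (⟨y.2.1 ++ y.2.2, y.2.1.length⟩ : Σ _ : List ℕ, ℕ)) ?_ ?_ ?_ ?_ ?_
  · rintro ⟨w, i⟩ hx
    rw [Finset.mem_sigma] at hx
    dsimp only at hx ⊢
    obtain ⟨hw, hi⟩ := hx
    obtain ⟨hnd, hTF⟩ := mem_permsF.mp hw
    obtain ⟨nA, nB, dAB, hBfs⟩ := take_drop_facts i hnd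
    rw [Finset.mem_sigma]
    dsimp only
    constructor
    · rw [Finset.mem_powerset, ← hTF]
      intro x hx
      rw [List.mem_toFinset] at hx ⊢
      exact List.take_subset _ _ hx
    · rw [Finset.mem_product]
      exact ⟨mem_permsF.mpr ⟨nA, rfl⟩, mem_permsF.mpr ⟨nB, by rw [hBfs, hTF]⟩⟩
  · rintro ⟨S, A, B⟩ hy
    rw [Finset.mem_sigma] at hy
    dsimp only at hy ⊢
    obtain ⟨hS, hAB⟩ := hy
    rw [Finset.mem_product] at hAB
    obtain ⟨hA, hB⟩ := hAB
    obtain ⟨nA, hAfs⟩ := mem_permsF.mp hA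
    obtain ⟨nB, hBfs⟩ := mem_permsF.mp hB
    rw [Finset.mem_powerset] at hS
    have hdisj : A.Disjoint B := by
      rw [← List.disjoint_toFinset_iff_disjoint, hAfs, hBfs]
      exact Finset.disjoint_sdiff
    rw [Finset.mem_sigma]
    dsimp only
    constructor
    · rw [mem_permsF]
      refine ⟨List.nodup_append'.mpr ⟨nA, nB, hdisj⟩, ?_⟩
      rw [List.toFinset_append, hAfs, hBfs, Finset.union_sdiff_of_subset hS]
    · rw [Finset.mem_range]
      have h1 : A.length = S.card := length_eq_card hA
      have h2 := Finset.card_le_card hS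
      omega
  · rintro ⟨w, i⟩ hx
    rw [Finset.mem_sigma] at hx
    dsimp only at hx ⊢
    obtain ⟨hw, hi⟩ := hx
    rw [Finset.mem_range] at hi
    have hlen : i ≤ w.length := by
      rw [length_eq_card hw]; omega
    have h2 : (w.take i).length = i := by
      rw [List.length_take]; omega
    exact sigma_mk_eq (List.take_append_drop i w) h2
  · rintro ⟨S, A, B⟩ hy
    rw [Finset.mem_sigma] at hy
    dsimp only at hy ⊢
    obtain ⟨hS, hAB⟩ := hy
    rw [Finset.mem_product] at hAB
    obtain ⟨hA, hB⟩ := hAB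
    obtain ⟨nA, hAfs⟩ := mem_permsF.mp hA
    refine sigma_mk_eq ?_ ?_
    · rw [List.take_left' rfl, hAfs]
    · rw [List.take_left' rfl, List.drop_left' rfl]
  · rintro ⟨w, i⟩ hx
    rfl

lemma insert_perm (V : Finset ℕ) (v : ℕ) (hvV : v ∈ V) (Φ : List ℕ → ℤ) :
    ∑ S ∈ V.powerset.filter (fun S => v ∈ S), ∑ u ∈ permsF S, Φ u
      = ∑ T ∈ (V.erase v).powerset, ∑ w ∈ permsF T,
          ∑ i ∈ Finset.range (T.card + 1), Φ (w.take i ++ v :: w.drop i) := by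
  have hR : ∀ T : Finset ℕ, (∑ w ∈ permsF T,
        ∑ i ∈ Finset.range (T.card + 1), Φ (w.take i ++ v :: w.drop i))
      = ∑ q ∈ (permsF T) ×ˢ (Finset.range (T.card + 1)),
          Φ (q.1.take q.2 ++ v :: q.1.drop q.2) := by
    intro T; rw [Finset.sum_product]
  simp_rw [hR]
  rw [Finset.sum_sigma' (V.powerset.filter (fun S => v ∈ S)) (fun S => permsF S)
    (fun _ u => Φ u),
    Finset.sum_sigma' (V.erase v).powerset
    (fun T => (permsF T) ×ˢ (Finset.range (T.card + 1)))
    (fun _ q => Φ (q.1.take q.2 ++ v :: q.1.drop q.2))]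
  refine Finset.sum_bij'
    (fun x _ => (⟨(x.1).erase v,
      (x.2.take (x.2.idxOf v) ++ x.2.drop (x.2.idxOf v + 1), x.2.idxOf v)⟩ :
      Σ _ : Finset ℕ, List ℕ × ℕ))
    (fun y _ => (⟨insert v y.1, y.2.1.take y.2.2 ++ v :: y.2.1.drop y.2.2⟩ :
      Σ _ : Finset ℕ, List ℕ))
    ?_ ?_ ?_ ?_ ?_
  · -- forward membership
    rintro ⟨S, u⟩ hx
    rw [Finset.mem_sigma] at hx
    dsimp only at hx ⊢
    obtain ⟨hS, hu⟩ := hx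
    rw [Finset.mem_filter, Finset.mem_powerset] at hS
    obtain ⟨hSV, hvS⟩ := hS
    obtain ⟨hnd, hufs⟩ := mem_permsF.mp hu
    have hvu : v ∈ u := by rw [← List.mem_toFinset, hufs]; exact hvS
    have hdec : u = u.take (u.idxOf v) ++ v :: u.drop (u.idxOf v + 1) :=
      eq_take_cons_drop hvu
    have hmid : (u.take (u.idxOf v) ++ v :: u.drop (u.idxOf v + 1)).Nodup := by
      rw [← hdec]; exact hnd
    obtain ⟨nA, nB, hvA, hvB, dAB⟩ := nodup_mid hmid
    have hwfs : (u.take (u.idxOf v) ++ u.drop (u.idxOf v + 1)).toFinset = S.erase v := by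
      ext x
      rw [List.toFinset_append, Finset.mem_union, Finset.mem_erase, ← hufs]
      constructor
      · rintro (hx | hx)
        · rw [List.mem_toFinset] at hx
          refine ⟨fun h => hvA (h ▸ hx), ?_⟩
          rw [List.mem_toFinset, hdec]
          exact List.mem_append_left _ hx
        · rw [List.mem_toFinset] at hx
          refine ⟨fun h => hvB (h ▸ hx), ?_⟩
          rw [List.mem_toFinset, hdec]
          exact List.mem_append_right _ (by simp [hx])
      · rintro ⟨hxv, hxu⟩
        rw [List.mem_toFinset, hdec] at hxu
        rcases List.mem_append.mp hxu with h | h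
        · exact Or.inl (List.mem_toFinset.mpr h)
        · rcases List.mem_cons.mp h with h | h
          · exact absurd h hxv
          · exact Or.inr (List.mem_toFinset.mpr h)
    rw [Finset.mem_sigma]
    dsimp only
    constructor
    · rw [Finset.mem_powerset]
      exact Finset.erase_subset_erase _ hSV
    · rw [Finset.mem_product]
      constructor
      · exact mem_permsF.mpr ⟨List.nodup_append'.mpr ⟨nA, nB, dAB⟩, hwfs⟩
      · rw [Finset.mem_range]
        have h1 : (S.erase v).card = S.card - 1 := Finset.card_erase_of_mem hvS
        have h2 : u.length = S.card := length_eq_card hu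
        have h3 : u.idxOf v < u.length := List.idxOf_lt_length_iff.mpr hvu
        omega
  · -- backward membership
    rintro ⟨T, w, i⟩ hy
    rw [Finset.mem_sigma] at hy
    dsimp only at hy ⊢
    obtain ⟨hT, hwi⟩ := hy
    rw [Finset.mem_product] at hwi
    obtain ⟨hw, hi⟩ := hwi
    rw [Finset.mem_powerset] at hT
    obtain ⟨hnd, hwfs⟩ := mem_permsF.mp hw
    have hvT : v ∉ T := fun h => Finset.notMem_erase v V (hT h)
    have hvw : v ∉ w := by
      intro h
      apply hvT
      rw [← hwfs]
      exact List.mem_toFinset.mpr h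
    obtain ⟨nA, nB, dAB, _⟩ := take_drop_facts i hnd
    rw [Finset.mem_sigma]
    dsimp only
    constructor
    · rw [Finset.mem_filter, Finset.mem_powerset]
      exact ⟨Finset.insert_subset hvV (hT.trans (Finset.erase_subset _ _)), by simp⟩
    · rw [mem_permsF]
      constructor
      · rw [List.nodup_append']
        refine ⟨nA, List.nodup_cons.mpr ⟨fun h => hvw (List.drop_subset _ _ h), nB⟩, ?_⟩
        intro x hx hx2
        rcases List.mem_cons.mp hx2 with h | h
        · exact hvw (List.take_subset _ _ (h ▸ hx))
        · exact dAB hx h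
      · rw [toFinset_append_cons, ← List.toFinset_append, List.take_append_drop, hwfs]
  · -- left inverse
    rintro ⟨S, u⟩ hx
    rw [Finset.mem_sigma] at hx
    dsimp only at hx ⊢
    obtain ⟨hS, hu⟩ := hx
    rw [Finset.mem_filter, Finset.mem_powerset] at hS
    obtain ⟨hSV, hvS⟩ := hS
    obtain ⟨hnd, hufs⟩ := mem_permsF.mp hu
    have hvu : v ∈ u := by rw [← List.mem_toFinset, hufs]; exact hvS
    have hdec : u = u.take (u.idxOf v) ++ v :: u.drop (u.idxOf v + 1) :=
      eq_take_cons_drop hvu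
    have hlt : u.idxOf v < u.length := List.idxOf_lt_length_iff.mpr hvu
    have hlenA : (u.take (u.idxOf v)).length = u.idxOf v := by
      rw [List.length_take]; omega
    have htake : (u.take (u.idxOf v) ++ u.drop (u.idxOf v + 1)).take (u.idxOf v)
        = u.take (u.idxOf v) := List.take_left' hlenA
    have hdrop : (u.take (u.idxOf v) ++ u.drop (u.idxOf v + 1)).drop (u.idxOf v)
        = u.drop (u.idxOf v + 1) := List.drop_left' hlenA
    refine sigma_mk_eq (Finset.insert_erase hvS) ?_
    rw [htake, hdrop, ← hdec]
  · -- right inverse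
    rintro ⟨T, w, i⟩ hy
    rw [Finset.mem_sigma] at hy
    dsimp only at hy ⊢
    obtain ⟨hT, hwi⟩ := hy
    rw [Finset.mem_product] at hwi
    obtain ⟨hw, hi⟩ := hwi
    rw [Finset.mem_powerset] at hT
    rw [Finset.mem_range] at hi
    obtain ⟨hnd, hwfs⟩ := mem_permsF.mp hw
    have hvT : v ∉ T := fun h => Finset.notMem_erase v V (hT h)
    have hvw : v ∉ w := by
      intro h
      apply hvT
      rw [← hwfs]
      exact List.mem_toFinset.mpr h
    have hil : i ≤ w.length := by
      rw [length_eq_card hw]; omega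
    have hlenA : (w.take i).length = i := by rw [List.length_take]; omega
    have hvtake : v ∉ w.take i := fun h => hvw (List.take_subset _ _ h)
    have hidx : (w.take i ++ v :: w.drop i).idxOf v = i := by
      rw [indexOf_append_cons hvtake, hlenA]
    have htake : (w.take i ++ v :: w.drop i).take i = w.take i := List.take_left' hlenA
    have hdrop : (w.take i ++ v :: w.drop i).drop (i + 1) = w.drop i := by
      have hassoc : w.take i ++ v :: w.drop i = (w.take i ++ [v]) ++ w.drop i := by simp
      have hlen1 : (w.take i ++ [v]).length = i + 1 := by
        rw [List.length_append, hlenA]; rfl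
      rw [hassoc, List.drop_left' hlen1]
    refine sigma_mk_eq (Finset.erase_insert hvT) ?_
    rw [hidx, htake, hdrop, List.take_append_drop]
  · -- weight
    rintro ⟨S, u⟩ hx
    rw [Finset.mem_sigma] at hx
    dsimp only at hx ⊢
    obtain ⟨hS, hu⟩ := hx
    rw [Finset.mem_filter, Finset.mem_powerset] at hS
    obtain ⟨hSV, hvS⟩ := hS
    obtain ⟨hnd, hufs⟩ := mem_permsF.mp hu
    have hvu : v ∈ u := by rw [← List.mem_toFinset, hufs]; exact hvS
    have hdec : u = u.take (u.idxOf v) ++ v :: u.drop (u.idxOf v + 1) :=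
      eq_take_cons_drop hvu
    have hlt : u.idxOf v < u.length := List.idxOf_lt_length_iff.mpr hvu
    have hlenA : (u.take (u.idxOf v)).length = u.idxOf v := by
      rw [List.length_take]; omega
    have htake : (u.take (u.idxOf v) ++ u.drop (u.idxOf v + 1)).take (u.idxOf v)
        = u.take (u.idxOf v) := List.take_left' hlenA
    have hdrop : (u.take (u.idxOf v) ++ u.drop (u.idxOf v + 1)).drop (u.idxOf v)
        = u.drop (u.idxOf v + 1) := List.drop_left' hlenA
    rw [htake, hdrop, ← hdec]
  
lemma powerset_pair (W : Finset ℕ) (φ : Finset ℕ → Finset ℕ → ℤ) :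
    ∑ T ∈ W.powerset, ∑ S ∈ T.powerset, φ S (T \ S)
      = ∑ S ∈ W.powerset, ∑ S' ∈ (W \ S).powerset, φ S S' := by
  rw [Finset.sum_sigma' W.powerset (fun T => T.powerset) (fun T S => φ S (T \ S)),
    Finset.sum_sigma' W.powerset (fun S => (W \ S).powerset) (fun S S' => φ S S')]
  refine Finset.sum_bij'
    (fun x _ => (⟨x.2, x.1 \ x.2⟩ : Σ _ : Finset ℕ, Finset ℕ))
    (fun y _ => (⟨y.1 ∪ y.2, y.1⟩ : Σ _ : Finset ℕ, Finset ℕ)) ?_ ?_ ?_ ?_ ?_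
  · rintro ⟨T, S⟩ hx
    rw [Finset.mem_sigma, Finset.mem_powerset, Finset.mem_powerset] at hx
    dsimp only at hx ⊢
    rw [Finset.mem_sigma, Finset.mem_powerset, Finset.mem_powerset]
    exact ⟨hx.2.trans hx.1, Finset.sdiff_subset_sdiff hx.1 (le_refl _)⟩
  · rintro ⟨S, S'⟩ hy
    rw [Finset.mem_sigma, Finset.mem_powerset, Finset.mem_powerset] at hy
    dsimp only at hy ⊢
    rw [Finset.mem_sigma, Finset.mem_powerset, Finset.mem_powerset]
    exact ⟨Finset.union_subset hy.1 (hy.2.trans Finset.sdiff_subset),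
      Finset.subset_union_left⟩
  · rintro ⟨T, S⟩ hx
    rw [Finset.mem_sigma, Finset.mem_powerset, Finset.mem_powerset] at hx
    dsimp only at hx ⊢
    exact sigma_mk_eq (Finset.union_sdiff_of_subset hx.2) rfl
  · rintro ⟨S, S'⟩ hy
    rw [Finset.mem_sigma, Finset.mem_powerset, Finset.mem_powerset] at hy
    dsimp only at hy ⊢
    have hdisj : Disjoint S S' :=
      Finset.disjoint_of_subset_right hy.2 Finset.disjoint_sdiff
    exact sigma_mk_eq rfl (Finset.union_sdiff_cancel_left hdisj)
  · rintro ⟨T, S⟩ hx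
    rfl

-- stage4 : the combinatorial count Cf and its recurrences

def Cf (P : Finset ℕ) : ℕ → Finset ℕ → ℤ
  | 0, V => if V = ∅ then 1 else 0
  | (h+1), V => ∑ S ∈ V.powerset, ∑ u ∈ permsF S, wt P u * Cf P h (V \ S)

lemma Cf_zero (P : Finset ℕ) (V : Finset ℕ) : Cf P 0 V = if V = ∅ then 1 else 0 := rfl

lemma Cf_succ (P : Finset ℕ) (h : ℕ) (V : Finset ℕ) :
    Cf P (h+1) V = ∑ S ∈ V.powerset, ∑ u ∈ permsF S, wt P u * Cf P h (V \ S) := rfl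

lemma permsF_empty : permsF ∅ = {[]} := by
  ext u
  rw [mem_permsF, Finset.mem_singleton]
  constructor
  · rintro ⟨h1, h2⟩
    rwa [List.toFinset_eq_empty_iff] at h2
  · rintro rfl
    exact ⟨List.nodup_nil, rfl⟩

lemma permsF_ne_nil {S : Finset ℕ} {w : List ℕ} (hw : w ∈ permsF S) (hS : S ≠ ∅) :
    w ≠ [] := by
  rintro rfl
  obtain ⟨-, h2⟩ := mem_permsF.mp hw
  exact hS (by rw [← h2]; rfl)

lemma Cf_empty (P : Finset ℕ) (h : ℕ) : Cf P h ∅ = 1 := by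
  induction h with
  | zero => simp [Cf_zero]
  | succ h ih =>
      rw [Cf_succ, Finset.powerset_empty, Finset.sum_singleton, permsF_empty,
        Finset.sum_singleton, wt_nil]
      simp [ih]

lemma Cf_zero_of_ne (P : Finset ℕ) {V : Finset ℕ} (hV : V ≠ ∅) : Cf P 0 V = 0 := by
  rw [Cf_zero, if_neg hV]

-- sum over insertion positions of weights
lemma wt_ins_sum (P : Finset ℕ) (v : ℕ) (w : List ℕ) (hnd : w.Nodup)
    (hlt : ∀ x ∈ w, x < v) :
    ∑ i ∈ Finset.range (w.length + 1), wt P (w.take i ++ v :: w.drop i)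
      = if v ∈ P then
          (∑ i ∈ Finset.range (w.length + 1), wt P (w.take i) * wt P (w.drop i))
            + (if w = [] then 1 else 0)
        else 2 * wt P w := by
  have hterm : ∀ i ∈ Finset.range (w.length + 1),
      wt P (w.take i ++ v :: w.drop i) =
        (if w.take i ≠ [] ∧ w.drop i ≠ [] then (if v ∈ P then 1 else 0)
          else (if w.take i = [] ∧ w.drop i = [] then 2 else 1))
          * (wt P (w.take i) * wt P (w.drop i)) := by
    intro i hi
    obtain ⟨nA, nB, dAB, _⟩ := take_drop_facts i hnd
    refine wt_split P _ _ v (fun x hx => hlt x (List.take_subset _ _ hx))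
      (fun x hx => hlt x (List.drop_subset _ _ hx)) ?_
    rw [List.disjoint_toFinset_iff_disjoint]
    exact dAB
  by_cases hv : v ∈ P
  · rw [if_pos hv]
    by_cases hw : w = []
    · subst hw
      simp only [List.length_nil, zero_add, Finset.range_one, Finset.sum_singleton]
      rw [hterm 0 (by simp)]
      simp [wt_nil, hv]
    · rw [if_neg hw]
      rw [Finset.sum_congr rfl hterm]
      rw [add_zero]
      refine Finset.sum_congr rfl ?_
      intro i hi
      rw [Finset.mem_range] at hi
      have hne : ¬ (w.take i = [] ∧ w.drop i = []) := by
        rintro ⟨h1, h2⟩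
        exact hw (by rw [← List.take_append_drop i w, h1, h2]; rfl)
      by_cases h0 : w.take i = []
      · rw [if_neg (by tauto), if_neg hne]
        ring
      · by_cases h1 : w.drop i = []
        · rw [if_neg (by tauto), if_neg hne]
          ring
        · rw [if_pos ⟨h0, h1⟩, if_pos hv]
          ring
  · rw [if_neg hv]
    rw [Finset.sum_congr rfl hterm]
    by_cases hw : w = []
    · subst hw
      simp only [List.length_nil, zero_add, Finset.range_one, Finset.sum_singleton]
      simp [wt_nil, hv]
    · have hlen : 0 < w.length := List.length_pos_iff.mpr hw
      have hterm2 : ∀ i ∈ Finset.range (w.length + 1),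
          (if w.take i ≠ [] ∧ w.drop i ≠ [] then (if v ∈ P then 1 else 0)
            else (if w.take i = [] ∧ w.drop i = [] then 2 else 1))
            * (wt P (w.take i) * wt P (w.drop i))
          = (if i = 0 then wt P w else 0) + (if i = w.length then wt P w else 0) := by
        intro i hi
        rw [Finset.mem_range] at hi
        by_cases h0 : i = 0
        · subst h0
          have htk : w.take 0 = [] := rfl
          rw [htk]
          simp only [List.drop_zero]
          rw [if_neg (by simp), if_neg (by tauto), wt_nil]
          simp
          exact fun h => absurd h (by omega)
        · by_cases h1 : i = w.length
          · subst h1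
            rw [List.take_length, List.drop_length, wt_nil]
            rw [if_neg (by tauto), if_neg (by tauto),
              if_neg h0, if_pos rfl]
            ring
          · have ht : w.take i ≠ [] := by
              apply List.ne_nil_of_length_pos
              rw [List.length_take]
              omega
            have hd : w.drop i ≠ [] := by
              apply List.ne_nil_of_length_pos
              rw [List.length_drop]
              omega
            rw [if_pos ⟨ht, hd⟩, if_neg hv, if_neg h0, if_neg h1]
            ring
      rw [Finset.sum_congr rfl hterm2, Finset.sum_add_distrib]
      rw [Finset.sum_ite_eq' (Finset.range (w.length + 1)) 0 (fun _ => wt P w),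
        Finset.sum_ite_eq' (Finset.range (w.length + 1)) w.length (fun _ => wt P w)]
      simp only [Finset.mem_range]
      rw [if_pos (by omega), if_pos (by omega)]
      ring

-- stage5 : recurrences for Cf

lemma sdiff_sdiff_eq' {W S T : Finset ℕ} (hST : S ⊆ T) :
    W \ T = (W \ S) \ (T \ S) := by
  ext x
  simp only [Finset.mem_sdiff]
  constructor
  · rintro ⟨h1, h2⟩
    exact ⟨⟨h1, fun h => h2 (hST h)⟩, fun h => h2 h.1⟩
  · rintro ⟨⟨h1, h2⟩, h3⟩
    refine ⟨h1, fun h => ?_⟩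
    by_cases hx : x ∈ S
    · exact h2 hx
    · exact h3 ⟨h, hx⟩

lemma mem_lt_of_erase {W : Finset ℕ} {v : ℕ} (hbd : ∀ y ∈ W, y ≤ v)
    {T : Finset ℕ} (hT : T ⊆ W.erase v) {w : List ℕ} (hw : w ∈ permsF T) :
    ∀ x ∈ w, x < v := by
  intro x hx
  obtain ⟨-, hwfs⟩ := mem_permsF.mp hw
  have hxT : x ∈ T := by rw [← hwfs]; exact List.mem_toFinset.mpr hx
  have := Finset.mem_erase.mp (hT hxT)
  exact lt_of_le_of_ne (hbd x this.2) this.1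

lemma toFinset_ins_eq {W T : Finset ℕ} {v : ℕ} (hvT : v ∉ T) (hvW : v ∈ W)
    {w : List ℕ} (hwfs : w.toFinset = T) (i : ℕ) :
    W \ (w.take i ++ v :: w.drop i).toFinset = (W.erase v) \ T := by
  rw [toFinset_append_cons, ← List.toFinset_append, List.take_append_drop, hwfs,
    sdiff_erase_eq (Finset.mem_insert_self v T), Finset.erase_insert hvT]

lemma Cf_rec_notP (P : Finset ℕ) (v : ℕ) (hvP : v ∉ P) :
    ∀ (h : ℕ) (W : Finset ℕ), v ∈ W → (∀ y ∈ W, y ≤ v) →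
      Cf P h W = 2 * (h : ℤ) * Cf P h (W.erase v) := by
  intro h
  induction h with
  | zero =>
      intro W hvW hbd
      rw [Cf_zero_of_ne P (Finset.ne_empty_of_mem hvW)]
      push_cast
      ring
  | succ h ih =>
      intro W hvW hbd
      rw [Cf_succ, ← Finset.sum_filter_add_sum_filter_not W.powerset (fun S => v ∈ S)]
      have hA : (∑ S ∈ W.powerset.filter (fun S => ¬ v ∈ S),
            ∑ u ∈ permsF S, wt P u * Cf P h (W \ S))
          = 2 * (h:ℤ) * Cf P (h+1) (W.erase v) := by
        rw [powerset_filter_not_mem, Cf_succ, Finset.mul_sum]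
        refine Finset.sum_congr rfl ?_
        intro S hS
        rw [Finset.mem_powerset] at hS
        have hvS : v ∉ S := fun hx => (Finset.mem_erase.mp (hS hx)).1 rfl
        have hvWS : v ∈ W \ S := Finset.mem_sdiff.mpr ⟨hvW, hvS⟩
        have hbd' : ∀ y ∈ W \ S, y ≤ v := fun y hy => hbd y (Finset.mem_sdiff.mp hy).1
        rw [Finset.mul_sum]
        refine Finset.sum_congr rfl ?_
        intro u hu
        rw [ih (W \ S) hvWS hbd', erase_sdiff_eq hvS]
        ring
      have hB : (∑ S ∈ W.powerset.filter (fun S => v ∈ S),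
            ∑ u ∈ permsF S, wt P u * Cf P h (W \ S))
          = 2 * Cf P (h+1) (W.erase v) := by
        have hcong : ∀ S ∈ W.powerset.filter (fun S => v ∈ S),
            (∑ u ∈ permsF S, wt P u * Cf P h (W \ S))
              = ∑ u ∈ permsF S, wt P u * Cf P h (W \ u.toFinset) := by
          intro S hS
          exact Finset.sum_congr rfl fun u hu => by rw [(mem_permsF.mp hu).2]
        rw [Finset.sum_congr rfl hcong,
          insert_perm W v hvW (fun u => wt P u * Cf P h (W \ u.toFinset))]
        have h1 : ∀ T ∈ (W.erase v).powerset,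
            (∑ w ∈ permsF T, ∑ i ∈ Finset.range (T.card + 1),
              wt P (w.take i ++ v :: w.drop i)
                * Cf P h (W \ (w.take i ++ v :: w.drop i).toFinset))
            = ∑ w ∈ permsF T, (2 * wt P w) * Cf P h ((W.erase v) \ T) := by
          intro T hT
          rw [Finset.mem_powerset] at hT
          refine Finset.sum_congr rfl ?_
          intro w hw
          obtain ⟨hnd, hwfs⟩ := mem_permsF.mp hw
          have hvT : v ∉ T := fun hx => (Finset.mem_erase.mp (hT hx)).1 rfl
          have hrw : ∀ i ∈ Finset.range (T.card + 1),
              wt P (w.take i ++ v :: w.drop i)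
                  * Cf P h (W \ (w.take i ++ v :: w.drop i).toFinset)
                = wt P (w.take i ++ v :: w.drop i) * Cf P h ((W.erase v) \ T) := by
            intro i hi
            rw [toFinset_ins_eq hvT hvW hwfs]
          rw [Finset.sum_congr rfl hrw, ← Finset.sum_mul]
          have hTc : T.card = w.length := (length_eq_card hw).symm
          rw [hTc, wt_ins_sum P v w hnd (mem_lt_of_erase hbd hT hw), if_neg hvP]
        rw [Finset.sum_congr rfl h1, Cf_succ, Finset.mul_sum]
        refine Finset.sum_congr rfl fun T hT => ?_
        rw [Finset.mul_sum]
        exact Finset.sum_congr rfl fun w hw => by ring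
      rw [hA, hB]
      push_cast
      ring

-- stage6 : recurrence for v ∈ P

lemma Cf_rec_P (P : Finset ℕ) (v : ℕ) (hvP : v ∈ P) :
    ∀ (h : ℕ) (W : Finset ℕ), v ∈ W → (∀ y ∈ W, y ≤ v) →
      Cf P h W = (h : ℤ) * (Cf P (h+1) (W.erase v) + Cf P (h-1) (W.erase v)) := by
  intro h
  induction h with
  | zero =>
      intro W hvW hbd
      rw [Cf_zero_of_ne P (Finset.ne_empty_of_mem hvW)]
      push_cast
      ring
  | succ h ih =>
      intro W hvW hbd
      rw [Cf_succ, ← Finset.sum_filter_add_sum_filter_not W.powerset (fun S => v ∈ S)]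
      -- Part A : subsets not containing v
      have hA : (∑ S ∈ W.powerset.filter (fun S => ¬ v ∈ S),
            ∑ u ∈ permsF S, wt P u * Cf P h (W \ S))
          = (h:ℤ) * Cf P (h+2) (W.erase v)
            + (h:ℤ) * ∑ S ∈ (W.erase v).powerset,
                ∑ u ∈ permsF S, wt P u * Cf P (h-1) ((W.erase v) \ S) := by
        rw [powerset_filter_not_mem]
        have hcong : ∀ S ∈ (W.erase v).powerset,
            (∑ u ∈ permsF S, wt P u * Cf P h (W \ S))
              = (∑ u ∈ permsF S, (h:ℤ) * (wt P u * Cf P (h+1) ((W.erase v) \ S)))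
                + ∑ u ∈ permsF S, (h:ℤ) * (wt P u * Cf P (h-1) ((W.erase v) \ S)) := by
          intro S hS
          rw [Finset.mem_powerset] at hS
          have hvS : v ∉ S := fun hx => (Finset.mem_erase.mp (hS hx)).1 rfl
          have hvWS : v ∈ W \ S := Finset.mem_sdiff.mpr ⟨hvW, hvS⟩
          have hbd' : ∀ y ∈ W \ S, y ≤ v := fun y hy => hbd y (Finset.mem_sdiff.mp hy).1
          rw [← Finset.sum_add_distrib]
          refine Finset.sum_congr rfl ?_
          intro u hu
          rw [ih (W \ S) hvWS hbd', erase_sdiff_eq hvS]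
          ring
        rw [Finset.sum_congr rfl hcong, Finset.sum_add_distrib]
        congr 1
        · rw [Finset.sum_congr rfl
            (fun (S : Finset ℕ) (hS : S ∈ (W.erase v).powerset) =>
              (Finset.mul_sum (permsF S)
                (fun u => wt P u * Cf P (h + 1) ((W.erase v) \ S)) ((h:ℤ))).symm),
            ← Finset.mul_sum]
          congr 1
        · rw [Finset.sum_congr rfl
            (fun (S : Finset ℕ) (hS : S ∈ (W.erase v).powerset) =>
              (Finset.mul_sum (permsF S)
                (fun u => wt P u * Cf P (h - 1) ((W.erase v) \ S)) ((h:ℤ))).symm),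
            ← Finset.mul_sum]
      -- the (h-1) sum collapses
      have hsub1 : (h:ℤ) * (∑ S ∈ (W.erase v).powerset,
            ∑ u ∈ permsF S, wt P u * Cf P (h-1) ((W.erase v) \ S))
          = (h:ℤ) * Cf P h (W.erase v) := by
        cases h with
        | zero => simp
        | succ h' =>
            rw [Nat.add_sub_cancel, ← Cf_succ]
      -- Part B : subsets containing v
      have hB : (∑ S ∈ W.powerset.filter (fun S => v ∈ S),
            ∑ u ∈ permsF S, wt P u * Cf P h (W \ S))
          = Cf P (h+2) (W.erase v) + Cf P h (W.erase v) := by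
        have hcong : ∀ S ∈ W.powerset.filter (fun S => v ∈ S),
            (∑ u ∈ permsF S, wt P u * Cf P h (W \ S))
              = ∑ u ∈ permsF S, wt P u * Cf P h (W \ u.toFinset) := by
          intro S hS
          exact Finset.sum_congr rfl fun u hu => by rw [(mem_permsF.mp hu).2]
        rw [Finset.sum_congr rfl hcong,
          insert_perm W v hvW (fun u => wt P u * Cf P h (W \ u.toFinset))]
        -- inner evaluation using wt_ins_sum (v ∈ P)
        have h1 : ∀ T ∈ (W.erase v).powerset,
            (∑ w ∈ permsF T, ∑ i ∈ Finset.range (T.card + 1),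
              wt P (w.take i ++ v :: w.drop i)
                * Cf P h (W \ (w.take i ++ v :: w.drop i).toFinset))
            = (∑ w ∈ permsF T, ∑ i ∈ Finset.range (T.card + 1),
                (wt P (w.take i) * wt P (w.drop i)) * Cf P h ((W.erase v) \ T))
              + (if T = ∅ then Cf P h (W.erase v) else 0) := by
          intro T hT
          rw [Finset.mem_powerset] at hT
          have hvT : v ∉ T := fun hx => (Finset.mem_erase.mp (hT hx)).1 rfl
          have hstep : ∀ w ∈ permsF T,
              (∑ i ∈ Finset.range (T.card + 1),
                wt P (w.take i ++ v :: w.drop i)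
                  * Cf P h (W \ (w.take i ++ v :: w.drop i).toFinset))
              = (∑ i ∈ Finset.range (T.card + 1),
                  (wt P (w.take i) * wt P (w.drop i))) * Cf P h ((W.erase v) \ T)
                + (if w = [] then 1 else 0) * Cf P h ((W.erase v) \ T) := by
            intro w hw
            obtain ⟨hnd, hwfs⟩ := mem_permsF.mp hw
            have hrw : ∀ i ∈ Finset.range (T.card + 1),
                wt P (w.take i ++ v :: w.drop i)
                    * Cf P h (W \ (w.take i ++ v :: w.drop i).toFinset)
                  = wt P (w.take i ++ v :: w.drop i) * Cf P h ((W.erase v) \ T) := by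
              intro i hi
              rw [toFinset_ins_eq hvT hvW hwfs]
            rw [Finset.sum_congr rfl hrw, ← Finset.sum_mul]
            have hTc : T.card = w.length := (length_eq_card hw).symm
            rw [hTc, wt_ins_sum P v w hnd (mem_lt_of_erase hbd hT hw), if_pos hvP,
              add_mul, ← hTc]
          rw [Finset.sum_congr rfl hstep, Finset.sum_add_distrib]
          congr 1
          · exact Finset.sum_congr rfl fun w hw => (Finset.sum_mul _ _ _)
          · by_cases hTe : T = ∅
            · subst hTe
              rw [permsF_empty, Finset.sum_singleton, if_pos rfl, if_pos rfl,
                Finset.sdiff_empty, one_mul]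
            · rw [if_neg hTe]
              refine Finset.sum_eq_zero fun w hw => ?_
              rw [if_neg (permsF_ne_nil hw hTe), zero_mul]
        rw [Finset.sum_congr rfl h1, Finset.sum_add_distrib]
        congr 1
        · -- convolution part equals Cf (h+2)
          have h2 : ∀ T ∈ (W.erase v).powerset,
              (∑ w ∈ permsF T, ∑ i ∈ Finset.range (T.card + 1),
                (wt P (w.take i) * wt P (w.drop i)) * Cf P h ((W.erase v) \ T))
              = ∑ S ∈ T.powerset,
                  (∑ A ∈ permsF S, ∑ B ∈ permsF (T \ S),
                    (wt P A * wt P B) * Cf P h (((W.erase v) \ S) \ (T \ S))) := by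
            intro T hT
            rw [Finset.mem_powerset] at hT
            have e1 : (∑ w ∈ permsF T, ∑ i ∈ Finset.range (T.card + 1),
                  (wt P (w.take i) * wt P (w.drop i)) * Cf P h ((W.erase v) \ T))
                = (∑ w ∈ permsF T, ∑ i ∈ Finset.range (T.card + 1),
                    wt P (w.take i) * wt P (w.drop i)) * Cf P h ((W.erase v) \ T) := by
              rw [Finset.sum_mul]
              exact Finset.sum_congr rfl fun w hw => (Finset.sum_mul _ _ _).symm
            rw [e1, split_perm T (wt P) (wt P), Finset.sum_mul]
            refine Finset.sum_congr rfl fun S hS => ?_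
            rw [Finset.mem_powerset] at hS
            rw [Finset.sum_mul, ← sdiff_sdiff_eq' hS]
            refine Finset.sum_congr rfl fun A hA => ?_
            rw [Finset.sum_mul]
          rw [Finset.sum_congr rfl h2,
            powerset_pair (W.erase v) (fun S S' => ∑ A ∈ permsF S, ∑ B ∈ permsF S',
              (wt P A * wt P B) * Cf P h (((W.erase v) \ S) \ S'))]
          rw [Cf_succ]
          refine Finset.sum_congr rfl fun S hS => ?_
          rw [Finset.sum_comm]
          refine Finset.sum_congr rfl fun A hA => ?_
          rw [Cf_succ, Finset.mul_sum]
          refine Finset.sum_congr rfl fun S' hS' => ?_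
          rw [Finset.mul_sum]
          exact Finset.sum_congr rfl fun B hB => by ring
        · -- the if-sum equals Cf P h (W.erase v)
          rw [Finset.sum_ite_eq' ((W.erase v).powerset) ∅ (fun _ => Cf P h (W.erase v)),
            if_pos (Finset.empty_mem_powerset _)]
      rw [hA, hB, hsub1]
      have : (h:ℤ) + 1 = ((h+1 : ℕ) : ℤ) := by push_cast; ring
      rw [Nat.add_sub_cancel]
      push_cast
      ring

-- stage7 : the walk formula FF and the main identity Cf = FF

def Ew (V P : Finset ℕ) (t : ℕ) : ℕ :=
  (V.filter (fun u => (P.filter (fun y => u < y)).card = t)).card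

noncomputable def FF (P V : Finset ℕ) (b : ℤ) : ℤ :=
  2 ^ (V.card - P.card) *
    ∑ ε : Fin P.card → Bool,
      ∏ t ∈ Finset.range (P.card + 1), (ht P.card ε t + b) ^ (Ew V P t)

lemma ht_succ_cons (k : ℕ) (c : Bool) (ε : Fin k → Bool) (t : ℕ) :
    ht (k+1) (Fin.cons c ε) (t+1) = (if c then (1:ℤ) else -1) + ht k ε t := by
  rw [ht, ht, Finset.sum_filter, Finset.sum_filter, Fin.sum_univ_succ]
  simp only [Fin.cons_zero, Fin.cons_succ, Fin.val_zero, Fin.val_succ]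
  rw [if_pos (Nat.succ_pos t)]
  congr 1
  refine Finset.sum_congr rfl fun i _ => ?_
  simp only [Nat.add_lt_add_iff_right]

-- E-lemmas
lemma Ew_zero_notP {V P : Finset ℕ} {v : ℕ} (hvV : v ∈ V) (hbd : ∀ y ∈ V, y ≤ v)
    (hvP : v ∉ P) (hPV : P ⊆ V) :
    Ew V P 0 = Ew (V.erase v) P 0 + 1 := by
  unfold Ew
  have hvpred : (P.filter (fun y => v < y)).card = 0 := by
    rw [Finset.card_eq_zero, Finset.filter_eq_empty_iff]
    intro y hy
    have := hbd y (hPV hy)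
    omega
  have hsp : V.filter (fun u => (P.filter (fun y => u < y)).card = 0)
      = insert v ((V.erase v).filter (fun u => (P.filter (fun y => u < y)).card = 0)) := by
    conv_lhs => rw [← Finset.insert_erase hvV]
    rw [Finset.filter_insert, if_pos hvpred]
  rw [hsp, Finset.card_insert_of_notMem]
  intro h
  exact (Finset.mem_erase.mp (Finset.mem_filter.mp h).1).1 rfl

lemma Ew_succ_notP {V P : Finset ℕ} {v : ℕ} (hvV : v ∈ V) (hbd : ∀ y ∈ V, y ≤ v)
    (hvP : v ∉ P) (hPV : P ⊆ V) (t : ℕ) :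
    Ew V P (t+1) = Ew (V.erase v) P (t+1) := by
  unfold Ew
  congr 1
  conv_lhs => rw [← Finset.insert_erase hvV]
  rw [Finset.filter_insert, if_neg]
  rw [Finset.card_eq_zero.mpr]
  · omega
  · rw [Finset.filter_eq_empty_iff]
    intro y hy
    have := hbd y (hPV hy)
    omega

lemma Ew_zero_P {V P : Finset ℕ} {v : ℕ} (hvV : v ∈ V) (hbd : ∀ y ∈ V, y ≤ v)
    (hvP : v ∈ P) (hPV : P ⊆ V) :
    Ew V P 0 = 1 := by
  unfold Ew
  rw [show V.filter (fun u => (P.filter (fun y => u < y)).card = 0) = {v} from ?_]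
  · exact Finset.card_singleton v
  ext u
  rw [Finset.mem_filter, Finset.mem_singleton]
  constructor
  · rintro ⟨huV, hc⟩
    by_contra hne
    have huv : u < v := lt_of_le_of_ne (hbd u huV) hne
    have : v ∈ P.filter (fun y => u < y) := Finset.mem_filter.mpr ⟨hvP, huv⟩
    rw [Finset.card_eq_zero] at hc
    rw [hc] at this
    exact absurd this (Finset.notMem_empty v)
  · rintro rfl
    refine ⟨hvV, ?_⟩
    rw [Finset.card_eq_zero, Finset.filter_eq_empty_iff]
    intro y hy
    have := hbd y (hPV hy)
    omega

lemma Ew_succ_P {V P : Finset ℕ} {v : ℕ} (hvV : v ∈ V) (hbd : ∀ y ∈ V, y ≤ v)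
    (hvP : v ∈ P) (hPV : P ⊆ V) (t : ℕ) :
    Ew V P (t+1) = Ew (V.erase v) (P.erase v) t := by
  unfold Ew
  congr 1
  ext u
  rw [Finset.mem_filter, Finset.mem_filter, Finset.mem_erase]
  constructor
  · rintro ⟨huV, hc⟩
    have hune : u ≠ v := by
      rintro rfl
      rw [Finset.card_eq_zero.mpr] at hc
      · omega
      · rw [Finset.filter_eq_empty_iff]
        intro y hy
        have := hbd y (hPV hy)
        omega
    refine ⟨⟨hune, huV⟩, ?_⟩
    have huv : u < v := lt_of_le_of_ne (hbd u huV) hune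
    have hsplit : P.filter (fun y => u < y)
        = insert v ((P.erase v).filter (fun y => u < y)) := by
      ext y
      rw [Finset.mem_filter, Finset.mem_insert, Finset.mem_filter, Finset.mem_erase]
      constructor
      · rintro ⟨hyP, hy⟩
        by_cases hyv : y = v
        · exact Or.inl hyv
        · exact Or.inr ⟨⟨hyv, hyP⟩, hy⟩
      · rintro (rfl | ⟨⟨hyv, hyP⟩, hy⟩)
        · exact ⟨hvP, huv⟩
        · exact ⟨hyP, hy⟩
    rw [hsplit, Finset.card_insert_of_notMem (fun h =>
      (Finset.mem_erase.mp (Finset.mem_filter.mp h).1).1 rfl)] at hc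
    omega
  · rintro ⟨⟨hune, huV⟩, hc⟩
    refine ⟨huV, ?_⟩
    have huv : u < v := lt_of_le_of_ne (hbd u huV) hune
    have hsplit : P.filter (fun y => u < y)
        = insert v ((P.erase v).filter (fun y => u < y)) := by
      ext y
      rw [Finset.mem_filter, Finset.mem_insert, Finset.mem_filter, Finset.mem_erase]
      constructor
      · rintro ⟨hyP, hy⟩
        by_cases hyv : y = v
        · exact Or.inl hyv
        · exact Or.inr ⟨⟨hyv, hyP⟩, hy⟩
      · rintro (rfl | ⟨⟨hyv, hyP⟩, hy⟩)
        · exact ⟨hvP, huv⟩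
        · exact ⟨hyP, hy⟩
    rw [hsplit, Finset.card_insert_of_notMem (fun h =>
      (Finset.mem_erase.mp (Finset.mem_filter.mp h).1).1 rfl), hc]

lemma FF_notP {P V : Finset ℕ} {v : ℕ} (hvV : v ∈ V) (hbd : ∀ y ∈ V, y ≤ v)
    (hvP : v ∉ P) (hPV : P ⊆ V) (b : ℤ) :
    FF P V b = 2 * b * FF P (V.erase v) b := by
  unfold FF
  have hPV' : P ⊆ V.erase v := Finset.subset_erase.mpr ⟨hPV, hvP⟩
  have hcards : V.card = (V.erase v).card + 1 := by
    rw [Finset.card_erase_of_mem hvV]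
    have := Finset.card_pos.mpr ⟨v, hvV⟩
    omega
  have hkle : P.card ≤ (V.erase v).card := Finset.card_le_card hPV'
  have hpow : (2:ℤ) ^ (V.card - P.card) = 2 * 2 ^ ((V.erase v).card - P.card) := by
    rw [hcards]
    rw [show (V.erase v).card + 1 - P.card = ((V.erase v).card - P.card) + 1 by omega]
    ring
  have hprod : ∀ ε : Fin P.card → Bool,
      (∏ t ∈ Finset.range (P.card + 1), (ht P.card ε t + b) ^ (Ew V P t))
        = b * ∏ t ∈ Finset.range (P.card + 1), (ht P.card ε t + b) ^ (Ew (V.erase v) P t) := by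
    intro ε
    rw [Finset.prod_range_succ' (fun t => (ht P.card ε t + b) ^ (Ew V P t)) P.card,
      Finset.prod_range_succ' (fun t => (ht P.card ε t + b) ^ (Ew (V.erase v) P t)) P.card]
    rw [(Finset.prod_congr rfl (fun t _ => by
      rw [Ew_succ_notP hvV hbd hvP hPV t]) :
        (∏ t ∈ Finset.range P.card, (ht P.card ε (t+1) + b) ^ (Ew V P (t+1)))
          = ∏ t ∈ Finset.range P.card, (ht P.card ε (t+1) + b) ^ (Ew (V.erase v) P (t+1)))]
    rw [ht_zero, zero_add, Ew_zero_notP hvV hbd hvP hPV, pow_succ]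
    ring
  rw [Finset.sum_congr rfl (fun ε _ => hprod ε), ← Finset.mul_sum, hpow]
  ring

lemma walk_sum_succ (k : ℕ) (E : ℕ → ℕ) (hE0 : E 0 = 1) (b : ℤ) :
    ∑ ε : Fin (k+1) → Bool, ∏ t ∈ Finset.range (k+2), (ht (k+1) ε t + b) ^ E t
      = b * ((∑ ε : Fin k → Bool,
            ∏ t ∈ Finset.range (k+1), (ht k ε t + (b+1)) ^ E (t+1))
          + (∑ ε : Fin k → Bool,
            ∏ t ∈ Finset.range (k+1), (ht k ε t + (b-1)) ^ E (t+1))) := by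
  rw [← Equiv.sum_comp (Fin.consEquiv (fun _ : Fin (k+1) => Bool))
    (fun ε => ∏ t ∈ Finset.range (k+2), (ht (k+1) ε t + b) ^ E t)]
  rw [Fintype.sum_prod_type]
  rw [Fintype.sum_bool]
  have hp : ∀ (c : Bool) (ε : Fin k → Bool),
      (∏ t ∈ Finset.range (k+2), (ht (k+1) (Fin.consEquiv _ (c, ε)) t + b) ^ E t)
        = b * ∏ t ∈ Finset.range (k+1),
            (ht k ε t + (b + (if c then 1 else -1))) ^ E (t+1) := by
    intro c ε
    have hce : (Fin.consEquiv (fun _ : Fin (k+1) => Bool)) (c, ε) = Fin.cons c ε := rfl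
    rw [hce]
    rw [Finset.prod_range_succ'
      (fun t => (ht (k+1) (Fin.cons c ε) t + b) ^ E t) (k+1)]
    rw [ht_zero, zero_add, hE0, pow_one]
    rw [(Finset.prod_congr rfl (fun t _ => by
      rw [ht_succ_cons]
      ring_nf) :
        (∏ t ∈ Finset.range (k+1), (ht (k+1) (Fin.cons c ε) (t+1) + b) ^ E (t+1))
          = ∏ t ∈ Finset.range (k+1), (ht k ε t + (b + (if c then 1 else -1))) ^ E (t+1))]
    ring
  have hpT : ∀ ε : Fin k → Bool,
      (∏ t ∈ Finset.range (k+2),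
        (ht (k+1) ((Fin.consEquiv (fun _ : Fin (k+1) => Bool)) (true, ε)) t + b) ^ E t)
      = b * ∏ t ∈ Finset.range (k+1), (ht k ε t + (b+1)) ^ E (t+1) := by
    intro ε
    rw [hp true ε]
    congr 1
  have hpF : ∀ ε : Fin k → Bool,
      (∏ t ∈ Finset.range (k+2),
        (ht (k+1) ((Fin.consEquiv (fun _ : Fin (k+1) => Bool)) (false, ε)) t + b) ^ E t)
      = b * ∏ t ∈ Finset.range (k+1), (ht k ε t + (b-1)) ^ E (t+1) := by
    intro ε
    rw [hp false ε]
    congr 1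
  rw [Finset.sum_congr rfl (fun ε _ => hpT ε),
    Finset.sum_congr rfl (fun ε _ => hpF ε)]
  rw [← Finset.mul_sum, ← Finset.mul_sum]
  ring

lemma FF_P {P V : Finset ℕ} {v : ℕ} (hvV : v ∈ V) (hbd : ∀ y ∈ V, y ≤ v)
    (hvP : v ∈ P) (hPV : P ⊆ V) (b : ℤ) :
    FF P V b = b * (FF (P.erase v) (V.erase v) (b+1) + FF (P.erase v) (V.erase v) (b-1)) := by
  obtain ⟨k', hk'⟩ : ∃ k', P.card = k' + 1 := by
    have := Finset.card_pos.mpr ⟨v, hvP⟩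
    exact ⟨P.card - 1, by omega⟩
  have hPk : (P.erase v).card = k' := by
    rw [Finset.card_erase_of_mem hvP, hk']
    omega
  have hPV' : P.erase v ⊆ V.erase v := Finset.erase_subset_erase _ hPV
  have hVc : V.card = (V.erase v).card + 1 := by
    rw [Finset.card_erase_of_mem hvV]
    have := Finset.card_pos.mpr ⟨v, hvV⟩
    omega
  have hkle : (P.erase v).card ≤ (V.erase v).card := Finset.card_le_card hPV'
  have hpow : V.card - P.card = (V.erase v).card - (P.erase v).card := by
    rw [hVc, hk', hPk]
    have : k' ≤ (V.erase v).card := by rw [← hPk]; exact hkle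
    omega
  unfold FF
  rw [hpow, hPk, hk']
  have hr2 : k' + 1 + 1 = k' + 2 := rfl
  rw [hr2, walk_sum_succ k' (Ew V P) (Ew_zero_P hvV hbd hvP hPV) b]
  have hrw : ∀ (b' : ℤ),
      (∑ ε : Fin k' → Bool, ∏ t ∈ Finset.range (k'+1), (ht k' ε t + b') ^ (Ew V P (t+1)))
        = ∑ ε : Fin k' → Bool, ∏ t ∈ Finset.range (k'+1),
            (ht k' ε t + b') ^ (Ew (V.erase v) (P.erase v) t) := by
    intro b'
    refine Finset.sum_congr rfl fun ε _ => Finset.prod_congr rfl fun t _ => ?_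
    rw [Ew_succ_P hvV hbd hvP hPV t]
  rw [hrw, hrw]
  ring

-- stage8 : main identity

lemma Cf_irrel (v : ℕ) (P : Finset ℕ) : ∀ (h : ℕ) (V : Finset ℕ), v ∉ V →
    Cf P h V = Cf (P.erase v) h V := by
  intro h
  induction h with
  | zero => intro V _; rfl
  | succ h ih =>
      intro V hvV
      rw [Cf_succ, Cf_succ]
      refine Finset.sum_congr rfl fun S hS => ?_
      rw [Finset.mem_powerset] at hS
      refine Finset.sum_congr rfl fun u hu => ?_
      have h1 : v ∉ u.toFinset := by
        intro hmem
        exact hvV (hS ((mem_permsF.mp hu).2 ▸ hmem))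
      rw [← wt_erase_irrel P v u h1, ih (V \ S) (fun hd => hvV (Finset.mem_sdiff.mp hd).1)]

lemma FF_empty (b : ℤ) : FF ∅ ∅ b = 1 := by
  unfold FF
  simp [Ew]
  exact Finset.card_eq_one.mpr ⟨fun i => i.elim0,
    Finset.eq_singleton_iff_unique_mem.mpr ⟨Finset.mem_univ _, fun x _ => funext fun i => i.elim0⟩⟩

lemma Cf_eq_FF : ∀ (n : ℕ) (V : Finset ℕ), V.card = n → ∀ P : Finset ℕ, P ⊆ V →
    ∀ h : ℕ, Cf P h V = FF P V (h : ℤ) := by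
  intro n
  induction n using Nat.strong_induction_on with
  | _ n IH =>
    intro V hVc P hPV h
    rcases Finset.eq_empty_or_nonempty V with rfl | hne
    · have hPe : P = ∅ := Finset.subset_empty.mp hPV
      subst hPe
      rw [Cf_empty, FF_empty]
    · set v := V.max' hne with hv
      have hvV : v ∈ V := V.max'_mem hne
      have hbd : ∀ y ∈ V, y ≤ v := fun y hy => V.le_max' y hy
      have hn1 : 1 ≤ n := by
        rw [← hVc]
        exact Finset.card_pos.mpr hne
      have hcard : (V.erase v).card < n := by
        rw [Finset.card_erase_of_mem hvV, hVc]
        omega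
      by_cases hvP : v ∈ P
      · cases h with
        | zero =>
            rw [Cf_zero_of_ne P hne.ne_empty]
            rw [Nat.cast_zero, FF_P hvV hbd hvP hPV 0]
            ring
        | succ h' =>
            rw [Cf_rec_P P v hvP (h'+1) V hvV hbd, Nat.add_sub_cancel,
              Cf_irrel v P (h'+1+1) (V.erase v) (Finset.notMem_erase v V),
              Cf_irrel v P h' (V.erase v) (Finset.notMem_erase v V)]
            have hP'V' : P.erase v ⊆ V.erase v := Finset.erase_subset_erase _ hPV
            rw [IH ((V.erase v).card) hcard (V.erase v) rfl (P.erase v) hP'V' (h'+1+1),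
              IH ((V.erase v).card) hcard (V.erase v) rfl (P.erase v) hP'V' h']
            rw [FF_P hvV hbd hvP hPV ((h'+1 : ℕ) : ℤ)]
            have c1 : ((h'+1+1 : ℕ) : ℤ) = ((h'+1 : ℕ) : ℤ) + 1 := by push_cast; ring
            have c2 : ((h' : ℕ) : ℤ) = ((h'+1 : ℕ) : ℤ) - 1 := by push_cast; ring
            rw [c1, c2]
      · rw [Cf_rec_notP P v hvP h V hvV hbd]
        have hPV' : P ⊆ V.erase v := Finset.subset_erase.mpr ⟨hPV, hvP⟩
        rw [IH ((V.erase v).card) hcard (V.erase v) rfl P hPV' h,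
          FF_notP hvV hbd hvP hPV (h:ℤ)]

-- stage9 : computing Ew for Icc 1 n via the p sequence

section EwP

variable (n k : ℕ) (P : Finset ℕ) (p : ℕ → ℕ)

lemma Ew_eq_p (hn : 1 ≤ n) (hP : P ⊆ Finset.Icc 1 n) (hk : P.card = k)
    (hp0 : p 0 = n + 1) (hpk : p (k + 1) = 1)
    (hdec : ∀ s t : ℕ, 1 ≤ s → s < t → t ≤ k → p t < p s)
    (himg : P = (Finset.Icc 1 k).image p) :
    ∀ t, t ≤ k → Ew (Finset.Icc 1 n) P t = p t - p (t + 1) := by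
  have hmemP : ∀ s, 1 ≤ s → s ≤ k → p s ∈ P := by
    intro s h1 h2
    rw [himg]
    exact Finset.mem_image.mpr ⟨s, Finset.mem_Icc.mpr ⟨h1, h2⟩, rfl⟩
  have hbnd : ∀ s, 1 ≤ s → s ≤ k → 1 ≤ p s ∧ p s ≤ n := by
    intro s h1 h2
    exact Finset.mem_Icc.mp (hP (hmemP s h1 h2))
  -- monotone facts (weak, valid from 0 to k+1)
  have hmono : ∀ s t, s ≤ t → t ≤ k + 1 → p t ≤ p s := by
    intro s t hst htk
    rcases Nat.eq_or_lt_of_le hst with rfl | hlt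
    · exact le_refl _
    rcases Nat.eq_or_lt_of_le htk with rfl | htk'
    · -- t = k+1
      rw [hpk]
      rcases Nat.eq_zero_or_pos s with rfl | hs
      · rw [hp0]; omega
      · have := hbnd s hs (by omega)
        omega
    · -- t ≤ k
      rcases Nat.eq_zero_or_pos s with rfl | hs
      · rw [hp0]
        have := hbnd t (by omega) (by omega)
        omega
      · exact le_of_lt (hdec s t hs hlt (by omega))
  have hstrict : ∀ s t, s < t → t ≤ k → p t < p s := by
    intro s t hst htk
    rcases Nat.eq_zero_or_pos s with rfl | hs
    · rw [hp0]
      have := hbnd t (by omega) htk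
      omega
    · exact hdec s t hs hst htk
  -- count characterization
  have hcount : ∀ t, t ≤ k → ∀ u, (p (t+1) ≤ u ∧ u < p t) →
      (P.filter (fun y => u < y)).card = t := by
    intro t htk u ⟨hu1, hu2⟩
    have hfil : P.filter (fun y => u < y) = (Finset.Icc 1 t).image p := by
      rw [himg, Finset.filter_image]
      congr 1
      ext s
      rw [Finset.mem_filter, Finset.mem_Icc, Finset.mem_Icc]
      constructor
      · rintro ⟨⟨hs1, hs2⟩, hs3⟩
        refine ⟨hs1, ?_⟩
        by_contra hc
        push_neg at hc
        have : p s ≤ p (t+1) := hmono (t+1) s (by omega) (by omega)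
        omega
      · rintro ⟨hs1, hs2⟩
        refine ⟨⟨hs1, by omega⟩, ?_⟩
        have : p t ≤ p s := hmono s t hs2 (by omega)
        omega
    rw [hfil, Finset.card_image_of_injOn, Nat.card_Icc]
    · omega
    · intro a ha b hb hab
      rw [Finset.mem_coe, Finset.mem_Icc] at ha hb
      by_contra hne
      rcases Nat.lt_or_ge a b with hl | hg
      · have := hstrict a b hl (by omega); omega
      · have hl : b < a := by omega
        have := hstrict b a hl (by omega); omega
  have hexists : ∀ u, 1 ≤ u → u ≤ n → ∃ t, t ≤ k ∧ p (t+1) ≤ u ∧ u < p t := by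
    intro u hu1 hu2
    have hP0 : u < p 0 := by omega
    refine ⟨Nat.findGreatest (fun s => u < p s) k,
      Nat.findGreatest_le (P := fun s => u < p s) k, ?_,
      Nat.findGreatest_spec (P := fun s => u < p s) (m := 0) (Nat.zero_le k) hP0⟩
    rcases Nat.eq_or_lt_of_le (Nat.findGreatest_le (P := fun s => u < p s) k) with heq | hlt
    · rw [heq, hpk]; omega
    · have := Nat.findGreatest_is_greatest (n := k)
        (k := Nat.findGreatest (fun s => u < p s) k + 1)
        (P := fun s => u < p s) (by omega) (by omega)
      omega
  intro t htk
  unfold Ew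
  have hfe : (Finset.Icc 1 n).filter
      (fun u => (P.filter (fun y => u < y)).card = t)
      = Finset.Icc (p (t+1)) (p t - 1) := by
    ext u
    rw [Finset.mem_filter, Finset.mem_Icc, Finset.mem_Icc]
    constructor
    · rintro ⟨⟨hu1, hu2⟩, hc⟩
      obtain ⟨t', ht'k, h1, h2⟩ := hexists u hu1 hu2
      have := hcount t' ht'k u ⟨h1, h2⟩
      have htt : t' = t := by omega
      subst htt
      omega
    · rintro ⟨h1, h2⟩
      have hpt1 : 1 ≤ p (t+1) := by
        rcases Nat.eq_or_lt_of_le htk with rfl | hl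
        · rw [hpk]
        · exact (hbnd (t+1) (by omega) (by omega)).1
      have hptn : p t ≤ n + 1 := by
        rcases Nat.eq_zero_or_pos t with rfl | ht
        · omega
        · have := hbnd t ht htk; omega
      have hu2 : u < p t := by omega
      refine ⟨⟨by omega, by omega⟩, hcount t htk u ⟨h1, hu2⟩⟩
  rw [hfe, Nat.card_Icc]
  have : p (t+1) ≤ p t := hmono t (t+1) (by omega) (by omega)
  have hpt : 1 ≤ p t := by
    rcases Nat.eq_zero_or_pos t with rfl | ht
    · omega
    · exact (hbnd t ht htk).1
  omega

end EwP

-- stage10 : final glue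

lemma Cf_one (P V : Finset ℕ) : Cf P 1 V = ∑ u ∈ permsF V, wt P u := by
  rw [Cf_succ]
  rw [Finset.sum_eq_single_of_mem V (Finset.mem_powerset_self V)]
  · refine Finset.sum_congr rfl fun u _ => ?_
    rw [Finset.sdiff_self, Cf_zero, if_pos rfl, mul_one]
  · intro S hS hne
    refine Finset.sum_eq_zero fun u _ => ?_
    rw [Cf_zero, if_neg, mul_zero]
    intro hemp
    rw [Finset.sdiff_eq_empty_iff_subset] at hemp
    exact hne (Finset.Subset.antisymm (Finset.mem_powerset.mp hS) hemp)

lemma perms_toFinset (n : ℕ) :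
    (List.range' 1 n).permutations.toFinset = permsF (Finset.Icc 1 n) := by
  have hnd : (List.range' 1 n).Nodup := (List.nodup_range' (s := 1) (n := n))
  have htf : (List.range' 1 n).toFinset = Finset.Icc 1 n := by
    ext x
    rw [List.mem_toFinset, Finset.mem_Icc, List.mem_range']
    constructor
    · rintro ⟨i, hi, rfl⟩; omega
    · rintro ⟨h1, h2⟩; exact ⟨x - 1, by omega, by omega⟩
  ext w
  rw [List.mem_toFinset, List.mem_permutations, mem_permsF]
  constructor
  · intro hperm
    exact ⟨hperm.symm.nodup hnd, by rw [← htf]; exact List.toFinset_eq_of_perm _ _ hperm⟩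
  · rintro ⟨h1, h2⟩
    rw [List.perm_ext_iff_of_nodup h1 hnd]
    intro a
    rw [← List.mem_toFinset, h2, ← htf, List.mem_toFinset]

lemma pinCount_eq (n : ℕ) (Q : Finset ℕ) :
    pinCount n Q = ((permsF (Finset.Icc 1 n)).filter (fun w => pinSet w = Q)).card := by
  rw [pinCount]
  have hnd : (List.range' 1 n).permutations.Nodup :=
    List.nodup_permutations _ (List.nodup_range' (s := 1) (n := n))
  rw [← List.toFinset_card_of_nodup (hnd.filter _), List.toFinset_filter, perms_toFinset]
  congr 1
  apply Finset.filter_congr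
  intro w _
  simp

lemma sum_wt_eq (P V : Finset ℕ) (hV : V.Nonempty) :
    ∑ u ∈ permsF V, wt P u
      = ∑ Q ∈ P.powerset,
          2^(Q.card+1) * (((permsF V).filter (fun w => pinSet w = Q)).card : ℤ) := by
  have h1 : ∑ u ∈ permsF V, wt P u
      = ∑ u ∈ (permsF V).filter (fun u => pinSet u ⊆ P), 2^((pinSet u).card + 1) := by
    rw [Finset.sum_filter]
    refine Finset.sum_congr rfl fun u hu => ?_
    rw [wt]
    have hne : u ≠ [] := permsF_ne_nil hu hV.ne_empty
    by_cases hc : pinSet u ⊆ P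
    · rw [if_pos hc, if_pos hc, if_neg hne, pow_succ]
    · rw [if_neg hc, if_neg hc]
  rw [h1]
  rw [← Finset.sum_fiberwise_of_maps_to (g := fun u => pinSet u) (t := P.powerset)
    (fun u hu => Finset.mem_powerset.mpr (Finset.mem_filter.mp hu).2)
    (fun u => (2:ℤ)^((pinSet u).card + 1))]
  refine Finset.sum_congr rfl fun Q hQ => ?_
  rw [Finset.mem_powerset] at hQ
  have hff : ((permsF V).filter (fun u => pinSet u ⊆ P)).filter (fun u => pinSet u = Q)
      = (permsF V).filter (fun w => pinSet w = Q) := by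
    rw [Finset.filter_filter]
    apply Finset.filter_congr
    intro w _
    constructor
    · rintro ⟨h1', h2'⟩; exact h2'
    · intro h'
      exact ⟨by rw [h']; exact hQ, h'⟩
  rw [hff]
  have hval : ∀ u ∈ (permsF V).filter (fun w => pinSet w = Q),
      (2:ℤ)^((pinSet u).card + 1) = 2^(Q.card + 1) := by
    intro u hu
    rw [(Finset.mem_filter.mp hu).2]
  rw [Finset.sum_congr rfl hval, Finset.sum_const, nsmul_eq_mul]
  ring

theorem weighted_sum_formula_all_walks (n k : ℕ) (hn : 1 ≤ n) (P : Finset ℕ)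
    (hP : P ⊆ Finset.Icc 1 n) (hk : P.card = k) (p : ℕ → ℕ)
    (hp0 : p 0 = n + 1) (hpk : p (k + 1) = 1)
    (hdec : ∀ s t : ℕ, 1 ≤ s → s < t → t ≤ k → p t < p s)
    (himg : P = (Finset.Icc 1 k).image p) :
    ∑ Q ∈ P.powerset, 2 ^ (Q.card + 1) * (pinCount n Q : ℤ) =
      2 ^ (n - k) *
        ∑ ε : Fin k → Bool,
          ∏ t ∈ Finset.range (k + 1), (ht k ε t + 1) ^ (p t - p (t + 1)) := by
  have hVc : (Finset.Icc 1 n).card = n := by rw [Nat.card_Icc]; omega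
  have hVne : (Finset.Icc 1 n).Nonempty := ⟨1, Finset.mem_Icc.mpr ⟨le_refl 1, hn⟩⟩
  have hL : ∑ Q ∈ P.powerset, 2 ^ (Q.card + 1) * (pinCount n Q : ℤ)
      = Cf P 1 (Finset.Icc 1 n) := by
    rw [Cf_one, sum_wt_eq P _ hVne]
    refine Finset.sum_congr rfl fun Q hQ => ?_
    rw [pinCount_eq]
  rw [hL, Cf_eq_FF ((Finset.Icc 1 n).card) (Finset.Icc 1 n) rfl P hP 1, Nat.cast_one]
  unfold FF
  rw [hVc, hk]
  congr 1
  refine Finset.sum_congr rfl fun ε _ => Finset.prod_congr rfl fun t htr => ?_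
  rw [Finset.mem_range] at htr
  rw [Ew_eq_p n k P p hn hP hk hp0 hpk hdec himg t (by omega)]
end
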